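/- arXiv:1403.4500 — 7 statements merged into one kernel-verified Lean document; each statement's English description precedes it below -/
import Mathlib

section
/- Let (X,(φ_t)_{t∈[0,T]}) be a compatible pair. Then for all u, v ∈ L²_X the map t ↦ (u(t), v(t))_{X(t)} is integrable on [0,T] and (u,v)_{L²_X} := ∫₀ᵀ (u(t), v(t))_{X(t)} dt defines an inner product on L²_X; likewise, for all f, g ∈ L²_{X*} the map t ↦ (f(t), g(t))_{X(t)*} is integrable on [0,T] and (f,g)_{L²_{X*}} := ∫₀ᵀ (f(t), g(t))_{X(t)*} dt defines an inner product on L²_{X*}. -/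
open MeasureTheory Set Filter Topology

noncomputable section

/-- A compatible pair `(X, (φ_t))` in the sense of Alphonse–Elliott–Stinner:
for each `t`, `X t` is a real (separable, complete: imposed as instance assumptions
where needed) inner product space, `φ t : X 0 ≃L[ℝ] X t` with `φ 0 = id`,
uniformly bounded together with its inverse on `[0,T]`, and `t ↦ ‖φ t u‖` continuous. -/
structure CompatiblePair (T : ℝ) (X : ℝ → Type*) [∀ t, NormedAddCommGroup (X t)]
    [∀ t, InnerProductSpace ℝ (X t)] where
  φ : ∀ t : ℝ, X 0 ≃L[ℝ] X t
  φ_zero : φ 0 = ContinuousLinearEquiv.refl ℝ (X 0)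
  C : ℝ
  C_pos : 0 < C
  norm_map_le : ∀ t ∈ Icc (0:ℝ) T, ∀ u : X 0, ‖φ t u‖ ≤ C * ‖u‖
  norm_symm_le : ∀ t ∈ Icc (0:ℝ) T, ∀ v : X t, ‖(φ t).symm v‖ ≤ C * ‖v‖
  continuous_norm : ∀ u : X 0, ContinuousOn (fun t => ‖φ t u‖) (Icc (0:ℝ) T)

variable {T : ℝ} {X : ℝ → Type*} [∀ t, NormedAddCommGroup (X t)]
  [∀ t, InnerProductSpace ℝ (X t)]

/-- Membership in `L²_X`: the pullback `t ↦ φ_{-t} u(t)` lies in `L²(0,T;X₀)`. -/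
def CompatiblePair.MemL2X (P : CompatiblePair T X) (u : ∀ t, X t) : Prop :=
  MemLp (fun t => (P.φ t).symm (u t)) 2 (volume.restrict (Ioc (0:ℝ) T))

/-- The dual operator `φ_t^* : X(t)* → X₀*`. -/
def CompatiblePair.pullDual (P : CompatiblePair T X) (t : ℝ) (f : StrongDual ℝ (X t)) :
    StrongDual ℝ (X 0) :=
  f.comp (P.φ t : X 0 →L[ℝ] X t)

/-- The inverse dual operator `φ_{-t}^* : X₀* → X(t)*`. -/
def CompatiblePair.pushDual (P : CompatiblePair T X) (t : ℝ) (f : StrongDual ℝ (X 0)) :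
    StrongDual ℝ (X t) :=
  f.comp ((P.φ t).symm : X t →L[ℝ] X 0)

/-- Membership in `L²_{X*}`: the pullback `t ↦ φ_t^* f(t)` lies in `L²(0,T;X₀*)`. -/
def CompatiblePair.MemL2Xstar (P : CompatiblePair T X) (f : ∀ t, StrongDual ℝ (X t)) :
    Prop :=
  MemLp (fun t => P.pullDual t (f t)) 2 (volume.restrict (Ioc (0:ℝ) T))

/-- The inner product on the dual of a real Hilbert space, via the Riesz isometry. -/
def dualInner {E : Type*} [NormedAddCommGroup E] [InnerProductSpace ℝ E] [CompleteSpace E]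
    (f g : StrongDual ℝ E) : ℝ :=
  inner ℝ ((InnerProductSpace.toDual ℝ E).symm f) ((InnerProductSpace.toDual ℝ E).symm g)

section AuxLemmas
variable {E : Type*} [NormedAddCommGroup E] [InnerProductSpace ℝ E]


theorem pettis [TopologicalSpace.SeparableSpace E] {v : ℝ → E}
    (h : ∀ c : E, Measurable fun t => (inner ℝ (v t) c : ℝ)) : StronglyMeasurable v := by
  borelize E
  obtain ⟨e, he⟩ := TopologicalSpace.exists_dense_seq E
  have key : ∀ y : E, Tendsto
      (fun N => (Finset.range (N + 1)).sup' (by simp) fun n => (inner ℝ y (e n) : ℝ) / ‖e n‖)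
      atTop (𝓝 ‖y‖) := by
    intro y
    set g : ℕ → ℝ := fun n => (inner ℝ y (e n) : ℝ) / ‖e n‖ with hgdef
    have hle : ∀ n, g n ≤ ‖y‖ := by
      intro n
      rcases eq_or_ne (e n) 0 with h0 | h0
      · simp [hgdef, h0]
      · rw [div_le_iff₀ (norm_pos_iff.2 h0)]
        exact real_inner_le_norm y (e n)
    have hmono : Monotone fun N => (Finset.range (N + 1)).sup' (by simp) g := fun a b hab =>
      Finset.sup'_mono g (Finset.range_subset_range.2 (by omega)) _
    have hbdd : ∀ N, (Finset.range (N + 1)).sup' (by simp) g ≤ ‖y‖ := fun N =>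
      Finset.sup'_le _ _ fun n _ => hle n
    have hBdd : BddAbove (Set.range fun N => (Finset.range (N + 1)).sup' (by simp) g) :=
      ⟨‖y‖, by rintro _ ⟨N, rfl⟩; exact hbdd N⟩
    have hlim := tendsto_atTop_ciSup hmono hBdd
    have hsup : (⨆ N, (Finset.range (N + 1)).sup' (by simp) g) = ‖y‖ := by
      refine le_antisymm (ciSup_le hbdd) ?_
      rcases eq_or_ne y 0 with rfl | hy
      · have hz : ∀ N, (Finset.range (N + 1)).sup' (by simp) g = 0 := by
          intro N
          have : g = fun _ => (0:ℝ) := by funext n; simp [hgdef]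
          rw [this, Finset.sup'_const]
        simp [hz]
      · have hyd : y ∈ closure (Set.range e) := he.closure_eq ▸ Set.mem_univ y
        rw [mem_closure_iff_seq_limit] at hyd
        obtain ⟨w, hw_mem, hw_lim⟩ := hyd
        choose k hk using hw_mem
        have hnorm : ‖y‖ ≠ 0 := norm_ne_zero_iff.2 hy
        have ht : Tendsto (fun m => (inner ℝ y (w m) : ℝ) / ‖w m‖) atTop (𝓝 ‖y‖) := by
          have h1 : Tendsto (fun m => (inner ℝ y (w m) : ℝ)) atTop (𝓝 (inner ℝ y y : ℝ)) :=
            ((continuous_const.inner continuous_id).tendsto y).comp hw_lim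
          have h2 : Tendsto (fun m => ‖w m‖) atTop (𝓝 ‖y‖) :=
            (continuous_norm.tendsto y).comp hw_lim
          have := h1.div h2 hnorm
          rwa [real_inner_self_eq_norm_mul_norm, mul_div_assoc, div_self hnorm, mul_one] at this
        refine le_of_tendsto ht (Eventually.of_forall fun m => ?_)
        have h1 : g (k m) ≤ (Finset.range (k m + 1)).sup' (by simp) g :=
          Finset.le_sup' g (Finset.self_mem_range_succ (k m))
        have h2 := le_ciSup hBdd (k m)
        rw [hgdef] at h1; simp only [hk] at h1
        exact h1.trans h2
    rwa [hsup] at hlim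
  have hdist : ∀ x : E, Measurable fun t => dist (v t) x := by
    intro x
    have hg : ∀ n, Measurable fun t => (inner ℝ (v t - x) (e n) : ℝ) / ‖e n‖ := by
      intro n
      have : Measurable fun t => (inner ℝ (v t) (e n) : ℝ) - inner ℝ x (e n) := (h (e n)).sub_const _
      simpa [inner_sub_left] using this.div_const ‖e n‖
    have hN : ∀ N : ℕ, Measurable fun t =>
        (Finset.range (N + 1)).sup' (by simp) fun n => (inner ℝ (v t - x) (e n) : ℝ) / ‖e n‖ := by
      intro N
      have := Finset.measurable_sup' (s := Finset.range (N + 1)) (by simp)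
        (f := fun n t => (inner ℝ (v t - x) (e n) : ℝ) / ‖e n‖) (fun n _ => hg n)
      have heq : (fun t => (Finset.range (N + 1)).sup' (by simp)
          fun n => (inner ℝ (v t - x) (e n) : ℝ) / ‖e n‖)
          = (Finset.range (N + 1)).sup' (by simp)
            (fun n t => (inner ℝ (v t - x) (e n) : ℝ) / ‖e n‖) := by
        funext t
        rw [Finset.sup'_apply]
      rw [heq]
      exact this
    have : Measurable fun t => ‖v t - x‖ :=
      measurable_of_tendsto_metrizable hN (tendsto_pi_nhds.2 fun t => key (v t - x))
    simpa [dist_eq_norm] using this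
  have hv : Measurable v := by
    apply measurable_of_isOpen
    intro U hU
    have : v ⁻¹' U = ⋃ (n : ℕ) (q : ℚ) (_ : Metric.ball (e n) (q:ℝ) ⊆ U),
        {t | dist (v t) (e n) < (q:ℝ)} := by
      ext t
      simp only [Set.mem_preimage, Set.mem_iUnion, Set.mem_setOf_eq]
      constructor
      · intro htU
        obtain ⟨r, hr, hball⟩ := Metric.isOpen_iff.1 hU (v t) htU
        obtain ⟨n, hn⟩ := Metric.denseRange_iff.1 he (v t) (r/4) (by linarith)
        have hn' : dist (v t) (e n) < r/4 := hn
        obtain ⟨q, hq1, hq2⟩ := exists_rat_btwn hn'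
        refine ⟨n, q, fun z hz => hball ?_, hq1⟩
        have hz' : dist z (e n) < (q:ℝ) := Metric.mem_ball.1 hz
        have h3 : dist (e n) (v t) < r/4 := by rw [dist_comm]; exact hn'
        have : dist z (v t) < r := by
          have := dist_triangle z (e n) (v t)
          nlinarith [hr]
        exact Metric.mem_ball.2 this
      · rintro ⟨n, q, hsub, hlt⟩
        exact hsub (Metric.mem_ball.2 hlt)
    rw [this]
    refine MeasurableSet.iUnion fun n => MeasurableSet.iUnion fun q => MeasurableSet.iUnion fun _ => ?_
    exact measurableSet_lt (hdist (e n)) measurable_const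
  haveI : SecondCountableTopology E := UniformSpace.secondCountable_of_separable E
  exact hv.stronglyMeasurable

theorem comp_meas [TopologicalSpace.SeparableSpace E] [CompleteSpace E]
    {S : ℝ → E →L[ℝ] E} (hS : ∀ b : E, StronglyMeasurable fun t => S t b)
    {v : ℝ → E} (hv : StronglyMeasurable v) : StronglyMeasurable fun t => S t (v t) := by
  borelize E
  haveI : SecondCountableTopology E := UniformSpace.secondCountable_of_separable E
  have happrox : ∀ n, StronglyMeasurable fun t => S t (hv.approx n t) := by
    intro n
    exact (SimpleFunc.measurable_bind (hv.approx n) (fun c t => S t c)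
      (fun c => (hS c).measurable)).stronglyMeasurable
  refine stronglyMeasurable_of_tendsto atTop happrox (tendsto_pi_nhds.2 fun t => ?_)
  exact ((S t).continuous.tendsto (v t)).comp (hv.tendsto_approx t)

theorem inv_meas [TopologicalSpace.SeparableSpace E] [CompleteSpace E]
    {S R : ℝ → E →L[ℝ] E} {K m : ℝ} (hm : 0 < m) (hmK : m ≤ K)
    (hK : ∀ t (x : E), ‖S t x‖ ≤ K * ‖x‖)
    (hcoer : ∀ t (x : E), m * ‖x‖ ^ 2 ≤ (inner ℝ (S t x) x : ℝ))
    (hS : ∀ b : E, StronglyMeasurable fun t => S t b)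
    (hRS : ∀ t (b : E), S t (R t b) = b) :
    ∀ b : E, StronglyMeasurable fun t => R t b := by
  intro b
  have hKpos : 0 < K := hm.trans_le hmK
  set α : ℝ := m / K ^ 2 with hα
  set q : ℝ := Real.sqrt (1 - m ^ 2 / K ^ 2) with hq
  have hq0 : 0 ≤ q := Real.sqrt_nonneg _
  have harg : 0 ≤ 1 - m ^ 2 / K ^ 2 := by
    rw [sub_nonneg, div_le_one (by positivity)]
    nlinarith
  have hq1 : q < 1 := by
    rw [hq, Real.sqrt_lt' one_pos]
    have h1 : 0 < m ^ 2 / K ^ 2 := by positivity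
    nlinarith
  -- contraction estimate
  have hcontr : ∀ t (x : E), ‖x - α • S t x‖ ≤ q * ‖x‖ := by
    intro t x
    have hsq : ‖x - α • S t x‖ ^ 2 ≤ q ^ 2 * ‖x‖ ^ 2 := by
      rw [norm_sub_sq_real]
      have h1 : (inner ℝ x (α • S t x) : ℝ) = α * inner ℝ (S t x) x := by
        rw [inner_smul_right, real_inner_comm]
      have h2 : ‖α • S t x‖ ^ 2 = α ^ 2 * ‖S t x‖ ^ 2 := by
        rw [norm_smul]
        rw [mul_pow, Real.norm_eq_abs, sq_abs]
      have h3 : α * (m * ‖x‖ ^ 2) ≤ α * inner ℝ (S t x) x :=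
        mul_le_mul_of_nonneg_left (hcoer t x) (by positivity)
      have h4 : ‖S t x‖ ^ 2 ≤ (K * ‖x‖) ^ 2 := by
        have := hK t x
        have h5 : 0 ≤ ‖S t x‖ := norm_nonneg _
        nlinarith
      have hq2 : q ^ 2 = 1 - m ^ 2 / K ^ 2 := Real.sq_sqrt harg
      rw [h1, h2, hq2]
      have hKne : (K:ℝ) ^ 2 ≠ 0 := by positivity
      have hαval : α * m = m ^ 2 / K ^ 2 := by rw [hα]; field_simp
      have hα2K : α ^ 2 * (K ^ 2) = m ^ 2 / K ^ 2 := by rw [hα]; field_simp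
      nlinarith [h3, h4, sq_nonneg ‖x‖, sq_nonneg (α * ‖S t x‖)]
    have h6 : 0 ≤ q * ‖x‖ := by positivity
    nlinarith [norm_nonneg (x - α • S t x)]
  -- the iteration
  set x : ℕ → ℝ → E := fun n => Nat.rec (fun _ => 0)
    (fun _ xn t => xn t - α • (S t (xn t) - b)) n with hx
  have hxmeas : ∀ n, StronglyMeasurable (x n) := by
    intro n
    induction n with
    | zero => exact stronglyMeasurable_const
    | succ n ih =>
      have h1 : StronglyMeasurable fun t => S t (x n t) := comp_meas hS ih
      exact ih.sub ((h1.sub stronglyMeasurable_const).const_smul α)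
  have herr : ∀ n t, ‖x n t - R t b‖ ≤ q ^ n * ‖R t b‖ := by
    intro n
    induction n with
    | zero => intro t; simp [hx]
    | succ n ih =>
      intro t
      have hstep : x (n+1) t - R t b = (x n t - R t b) - α • S t (x n t - R t b) := by
        have : S t (x n t - R t b) = S t (x n t) - b := by
          rw [map_sub, hRS]
        rw [this]
        show x n t - α • (S t (x n t) - b) - R t b = _
        abel
      rw [hstep]
      calc ‖(x n t - R t b) - α • S t (x n t - R t b)‖ ≤ q * ‖x n t - R t b‖ := hcontr t _
      _ ≤ q * (q ^ n * ‖R t b‖) := mul_le_mul_of_nonneg_left (ih t) hq0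
      _ = q ^ (n+1) * ‖R t b‖ := by ring
  refine stronglyMeasurable_of_tendsto atTop hxmeas (tendsto_pi_nhds.2 fun t => ?_)
  rw [tendsto_iff_norm_sub_tendsto_zero]
  have hlim : Tendsto (fun n : ℕ => q ^ n * ‖R t b‖) atTop (𝓝 0) := by
    simpa using (tendsto_pow_atTop_nhds_zero_of_lt_one hq0 hq1).mul_const ‖R t b‖
  exact squeeze_zero (fun n => norm_nonneg _) (fun n => herr n t) hlim


variable [CompleteSpace E]

theorem dualInner_comm' (f g : StrongDual ℝ E) : dualInner f g = dualInner g f :=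
  real_inner_comm _ _

theorem dualInner_add_left' (f₁ f₂ g : StrongDual ℝ E) :
    dualInner (f₁ + f₂) g = dualInner f₁ g + dualInner f₂ g := by
  unfold dualInner
  rw [map_add, inner_add_left]

theorem dualInner_smul_left' (c : ℝ) (f g : StrongDual ℝ E) :
    dualInner (c • f) g = c * dualInner f g := by
  unfold dualInner
  rw [_root_.map_smul, real_inner_smul_left]

theorem dualInner_self_nonneg' (f : StrongDual ℝ E) : 0 ≤ dualInner f f :=
  real_inner_self_nonneg

theorem dualInner_self_eq_zero' (f : StrongDual ℝ E) : dualInner f f = 0 ↔ f = 0 := by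
  unfold dualInner
  rw [inner_self_eq_zero, LinearIsometryEquiv.map_eq_zero_iff]

end AuxLemmas

set_option maxHeartbeats 1000000 in
theorem stmt0 (T : ℝ) (hT : 0 < T) (X : ℝ → Type*) [∀ t, NormedAddCommGroup (X t)]
    [∀ t, InnerProductSpace ℝ (X t)] [∀ t, CompleteSpace (X t)]
    [∀ t, TopologicalSpace.SeparableSpace (X t)] (P : CompatiblePair T X) :
    -- the pairing `t ↦ (u(t), v(t))_{X(t)}` is integrable on `[0,T]`
    ((∀ u v : ∀ t, X t, P.MemL2X u → P.MemL2X v →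
        IntegrableOn (fun t => (inner ℝ (u t) (v t) : ℝ)) (Ioc 0 T)) ∧
     -- symmetry
     (∀ u v : ∀ t, X t, P.MemL2X u → P.MemL2X v →
        (∫ t in Ioc (0:ℝ) T, (inner ℝ (u t) (v t) : ℝ))
          = ∫ t in Ioc (0:ℝ) T, (inner ℝ (v t) (u t) : ℝ)) ∧
     -- additivity in the first argument
     (∀ u₁ u₂ v : ∀ t, X t, P.MemL2X u₁ → P.MemL2X u₂ → P.MemL2X v →
        (∫ t in Ioc (0:ℝ) T, (inner ℝ (u₁ t + u₂ t) (v t) : ℝ))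
          = (∫ t in Ioc (0:ℝ) T, (inner ℝ (u₁ t) (v t) : ℝ))
            + ∫ t in Ioc (0:ℝ) T, (inner ℝ (u₂ t) (v t) : ℝ)) ∧
     -- homogeneity in the first argument
     (∀ (c : ℝ) (u v : ∀ t, X t), P.MemL2X u → P.MemL2X v →
        (∫ t in Ioc (0:ℝ) T, (inner ℝ (c • u t) (v t) : ℝ))
          = c * ∫ t in Ioc (0:ℝ) T, (inner ℝ (u t) (v t) : ℝ)) ∧
     -- nonnegativity
     (∀ u : ∀ t, X t, P.MemL2X u → 0 ≤ ∫ t in Ioc (0:ℝ) T, (inner ℝ (u t) (u t) : ℝ)) ∧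
     -- definiteness (as elements of `L²_X`, i.e. up to a.e. equality)
     (∀ u : ∀ t, X t, P.MemL2X u →
        (∫ t in Ioc (0:ℝ) T, (inner ℝ (u t) (u t) : ℝ)) = 0 →
        ∀ᵐ t ∂(volume.restrict (Ioc (0:ℝ) T)), u t = 0)) ∧
    -- dual statements for `L²_{X*}`
    ((∀ f g : ∀ t, StrongDual ℝ (X t), P.MemL2Xstar f → P.MemL2Xstar g →
        IntegrableOn (fun t => dualInner (f t) (g t)) (Ioc 0 T)) ∧
     (∀ f g : ∀ t, StrongDual ℝ (X t), P.MemL2Xstar f → P.MemL2Xstar g →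
        (∫ t in Ioc (0:ℝ) T, dualInner (f t) (g t))
          = ∫ t in Ioc (0:ℝ) T, dualInner (g t) (f t)) ∧
     (∀ f₁ f₂ g : ∀ t, StrongDual ℝ (X t),
        P.MemL2Xstar f₁ → P.MemL2Xstar f₂ → P.MemL2Xstar g →
        (∫ t in Ioc (0:ℝ) T, dualInner (f₁ t + f₂ t) (g t))
          = (∫ t in Ioc (0:ℝ) T, dualInner (f₁ t) (g t))
            + ∫ t in Ioc (0:ℝ) T, dualInner (f₂ t) (g t)) ∧
     (∀ (c : ℝ) (f g : ∀ t, StrongDual ℝ (X t)), P.MemL2Xstar f → P.MemL2Xstar g →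
        (∫ t in Ioc (0:ℝ) T, dualInner (c • f t) (g t))
          = c * ∫ t in Ioc (0:ℝ) T, dualInner (f t) (g t)) ∧
     (∀ f : ∀ t, StrongDual ℝ (X t), P.MemL2Xstar f →
        0 ≤ ∫ t in Ioc (0:ℝ) T, dualInner (f t) (f t)) ∧
     (∀ f : ∀ t, StrongDual ℝ (X t), P.MemL2Xstar f →
        (∫ t in Ioc (0:ℝ) T, dualInner (f t) (f t)) = 0 →
        ∀ᵐ t ∂(volume.restrict (Ioc (0:ℝ) T)), f t = 0)) := by
  set π : ℝ → ℝ := fun t => max 0 (min t T) with hπ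
  have hπmem : ∀ t, π t ∈ Icc (0:ℝ) T := fun t =>
    ⟨le_max_left _ _, max_le hT.le (min_le_right _ _)⟩
  have hπeq : ∀ t ∈ Ioc (0:ℝ) T, π t = t := by
    intro t ht
    simp only [hπ]
    rw [min_eq_left ht.2, max_eq_right ht.1.le]
  have hπcont : Continuous π := continuous_const.max (continuous_id.min continuous_const)
  set S₀ : ∀ s : ℝ, X 0 →L[ℝ] X 0 := fun s =>
    (ContinuousLinearMap.adjoint ((P.φ s : X 0 →L[ℝ] X s))).comp (P.φ s : X 0 →L[ℝ] X s)
    with hS₀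
  set Q₀ : ∀ s : ℝ, X 0 →L[ℝ] X 0 := fun s =>
    (((P.φ s).symm : X s →L[ℝ] X 0)).comp
      (ContinuousLinearMap.adjoint (((P.φ s).symm : X s →L[ℝ] X 0))) with hQ₀
  have hSinner : ∀ s (a c : X 0), (inner ℝ (S₀ s a) c : ℝ) = inner ℝ (P.φ s a) (P.φ s c) := by
    intro s a c
    simp [hS₀, ContinuousLinearMap.adjoint_inner_left]
  have hQinner : ∀ s (a c : X 0), (inner ℝ a (Q₀ s c) : ℝ) =
      inner ℝ (ContinuousLinearMap.adjoint (((P.φ s).symm : X s →L[ℝ] X 0)) a)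
        (ContinuousLinearMap.adjoint (((P.φ s).symm : X s →L[ℝ] X 0)) c) := by
    intro s a c
    rw [real_inner_comm]
    simp only [hQ₀, ContinuousLinearMap.coe_comp', Function.comp_apply]
    rw [ContinuousLinearMap.adjoint_inner_left, real_inner_comm]
  have hSQ : ∀ s (c : X 0), S₀ s (Q₀ s c) = c := by
    intro s c
    apply ext_inner_right ℝ
    intro z
    simp only [hS₀, hQ₀, ContinuousLinearMap.coe_comp', Function.comp_apply]
    rw [ContinuousLinearMap.adjoint_inner_left]
    rw [ContinuousLinearEquiv.coe_coe, ContinuousLinearEquiv.coe_coe,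
      ContinuousLinearEquiv.apply_symm_apply]
    rw [ContinuousLinearMap.adjoint_inner_left]
    simp
  -- operator norm bounds
  have hφop : ∀ s ∈ Icc (0:ℝ) T, ‖(P.φ s : X 0 →L[ℝ] X s)‖ ≤ P.C := fun s hs =>
    ContinuousLinearMap.opNorm_le_bound _ P.C_pos.le (P.norm_map_le s hs)
  have hψop : ∀ s ∈ Icc (0:ℝ) T, ‖((P.φ s).symm : X s →L[ℝ] X 0)‖ ≤ P.C := fun s hs =>
    ContinuousLinearMap.opNorm_le_bound _ P.C_pos.le (P.norm_symm_le s hs)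
  have hadjφ : ∀ s ∈ Icc (0:ℝ) T, ∀ y : X s,
      ‖ContinuousLinearMap.adjoint ((P.φ s : X 0 →L[ℝ] X s)) y‖ ≤ P.C * ‖y‖ := by
    intro s hs y
    calc ‖ContinuousLinearMap.adjoint ((P.φ s : X 0 →L[ℝ] X s)) y‖
        ≤ ‖ContinuousLinearMap.adjoint ((P.φ s : X 0 →L[ℝ] X s))‖ * ‖y‖ :=
          ContinuousLinearMap.le_opNorm _ _
      _ ≤ P.C * ‖y‖ := by
          apply mul_le_mul_of_nonneg_right _ (norm_nonneg y)
          rw [LinearIsometryEquiv.norm_map]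
          exact hφop s hs
  have hadjψ : ∀ s ∈ Icc (0:ℝ) T, ∀ y : X 0,
      ‖ContinuousLinearMap.adjoint (((P.φ s).symm : X s →L[ℝ] X 0)) y‖ ≤ P.C * ‖y‖ := by
    intro s hs y
    calc ‖ContinuousLinearMap.adjoint (((P.φ s).symm : X s →L[ℝ] X 0)) y‖
        ≤ ‖ContinuousLinearMap.adjoint (((P.φ s).symm : X s →L[ℝ] X 0))‖ * ‖y‖ :=
          ContinuousLinearMap.le_opNorm _ _
      _ ≤ P.C * ‖y‖ := by
          apply mul_le_mul_of_nonneg_right _ (norm_nonneg y)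
          rw [LinearIsometryEquiv.norm_map]
          exact hψop s hs
  set S : ℝ → X 0 →L[ℝ] X 0 := fun t => S₀ (π t) with hS
  set Q : ℝ → X 0 →L[ℝ] X 0 := fun t => Q₀ (π t) with hQdef
  have hSbound : ∀ t (x : X 0), ‖S t x‖ ≤ (P.C ^ 2 + 1 / P.C ^ 2) * ‖x‖ := by
    intro t x
    have h1 : ‖S t x‖ ≤ P.C * ‖P.φ (π t) x‖ := by
      simp only [hS, hS₀, ContinuousLinearMap.coe_comp', Function.comp_apply]
      exact hadjφ (π t) (hπmem t) _
    have h2 : ‖P.φ (π t) x‖ ≤ P.C * ‖x‖ := P.norm_map_le (π t) (hπmem t) x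
    have hC := P.C_pos
    have : ‖S t x‖ ≤ P.C * (P.C * ‖x‖) :=
      h1.trans (mul_le_mul_of_nonneg_left h2 hC.le)
    have hpos : 0 < 1 / P.C ^ 2 := by positivity
    nlinarith [norm_nonneg x]
  have hScoer : ∀ t (x : X 0), (1 / P.C ^ 2) * ‖x‖ ^ 2 ≤ (inner ℝ (S t x) x : ℝ) := by
    intro t x
    have h1 : (inner ℝ (S t x) x : ℝ) = ‖P.φ (π t) x‖ ^ 2 := by
      rw [hS]
      show (inner ℝ (S₀ (π t) x) x : ℝ) = _
      rw [hSinner, real_inner_self_eq_norm_sq]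
    have h2 : ‖x‖ ≤ P.C * ‖P.φ (π t) x‖ := by
      have := P.norm_symm_le (π t) (hπmem t) (P.φ (π t) x)
      rwa [ContinuousLinearEquiv.symm_apply_apply] at this
    rw [h1]
    have hC := P.C_pos
    rw [div_mul_eq_mul_div, one_mul, div_le_iff₀ (by positivity)]
    nlinarith [norm_nonneg x, norm_nonneg (P.φ (π t) x)]
  have hQbound : ∀ t (x : X 0), ‖Q t x‖ ≤ P.C ^ 2 * ‖x‖ := by
    intro t x
    have h1 : ‖Q t x‖ ≤ P.C * ‖ContinuousLinearMap.adjoint (((P.φ (π t)).symm : X (π t) →L[ℝ] X 0)) x‖ := by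
      simp only [hQdef, hQ₀, ContinuousLinearMap.coe_comp', Function.comp_apply]
      exact P.norm_symm_le (π t) (hπmem t) _
    have h2 := hadjψ (π t) (hπmem t) x
    have hC := P.C_pos
    have := h1.trans (mul_le_mul_of_nonneg_left h2 hC.le)
    nlinarith [norm_nonneg x]
  -- weak continuity of S
  have hnφ : ∀ u : X 0, Continuous fun t => ‖P.φ (π t) u‖ := fun u =>
    (P.continuous_norm u).comp_continuous hπcont hπmem
  have hScont : ∀ a c : X 0, Continuous fun t => (inner ℝ (S t a) c : ℝ) := by
    intro a c
    have heq : (fun t => (inner ℝ (S t a) c : ℝ)) = fun t =>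
        (‖P.φ (π t) (a + c)‖ * ‖P.φ (π t) (a + c)‖ - ‖P.φ (π t) a‖ * ‖P.φ (π t) a‖
          - ‖P.φ (π t) c‖ * ‖P.φ (π t) c‖) / 2 := by
      funext t
      rw [hS]
      show (inner ℝ (S₀ (π t) a) c : ℝ) = _
      rw [hSinner, real_inner_eq_norm_add_mul_self_sub_norm_mul_self_sub_norm_mul_self_div_two,
        ← map_add]
    rw [heq]
    exact ((((hnφ (a+c)).mul (hnφ (a+c))).sub ((hnφ a).mul (hnφ a))).sub
      ((hnφ c).mul (hnφ c))).div_const 2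
  have hSmeas : ∀ c : X 0, StronglyMeasurable fun t => S t c := fun c =>
    pettis (fun z => (hScont c z).measurable)
  have hQmeas : ∀ c : X 0, StronglyMeasurable fun t => Q t c := by
    refine inv_meas (S := S) (R := Q) (K := P.C ^ 2 + 1 / P.C ^ 2) (m := 1 / P.C ^ 2)
      (by have := P.C_pos; positivity) ?_ hSbound hScoer hSmeas ?_
    · have := P.C_pos
      nlinarith [sq_nonneg (P.C ^ 2)]
    · intro t c
      exact hSQ (π t) c
  set μ : Measure ℝ := volume.restrict (Ioc (0:ℝ) T) with hμ
  -- primal integrability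
  have primal_int : ∀ (u v : ∀ t, X t), P.MemL2X u → P.MemL2X v →
      Integrable (fun t => (inner ℝ (u t) (v t) : ℝ)) μ := by
    intro u v hu hv
    set u' : ℝ → X 0 := fun t => (P.φ t).symm (u t) with hu'
    set v' : ℝ → X 0 := fun t => (P.φ t).symm (v t) with hv'
    have hrw : ∀ t ∈ Ioc (0:ℝ) T, (inner ℝ (u t) (v t) : ℝ) = inner ℝ (S t (u' t)) (v' t) := by
      intro t ht
      rw [hS]
      show _ = (inner ℝ (S₀ (π t) (u' t)) (v' t) : ℝ)
      rw [hπeq t ht, hSinner]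
      congr 1 <;> simp [hu', hv']
    -- measurability
    have huae : AEStronglyMeasurable u' μ := hu.1
    have hvae : AEStronglyMeasurable v' μ := hv.1
    have hG : StronglyMeasurable fun t => (inner ℝ (S t (huae.mk u' t)) (hvae.mk v' t) : ℝ) :=
      (comp_meas hSmeas huae.stronglyMeasurable_mk).inner hvae.stronglyMeasurable_mk
    have haesm : AEStronglyMeasurable (fun t => (inner ℝ (u t) (v t) : ℝ)) μ := by
      refine hG.aestronglyMeasurable.congr ?_
      filter_upwards [huae.ae_eq_mk, hvae.ae_eq_mk, ae_restrict_mem measurableSet_Ioc]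
        with t h1 h2 ht
      rw [hrw t ht, h1, h2]
    -- integrable bound
    have hbd : Integrable (fun t => P.C ^ 2 / 2 * (‖u' t‖ ^ 2 + ‖v' t‖ ^ 2)) μ :=
      ((hu.norm.integrable_sq).add (hv.norm.integrable_sq)).const_mul _
    refine hbd.mono' haesm ?_
    filter_upwards [ae_restrict_mem measurableSet_Ioc] with t ht
    have h1 : |(inner ℝ (u t) (v t) : ℝ)| ≤ ‖u t‖ * ‖v t‖ := abs_real_inner_le_norm _ _
    have h2 : ‖u t‖ ≤ P.C * ‖u' t‖ := by
      have := P.norm_map_le t (Ioc_subset_Icc_self ht) (u' t)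
      simpa [hu', ContinuousLinearEquiv.apply_symm_apply] using this
    have h3 : ‖v t‖ ≤ P.C * ‖v' t‖ := by
      have := P.norm_map_le t (Ioc_subset_Icc_self ht) (v' t)
      simpa [hv', ContinuousLinearEquiv.apply_symm_apply] using this
    rw [Real.norm_eq_abs]
    have hC := P.C_pos
    nlinarith [norm_nonneg (u t), norm_nonneg (v t), norm_nonneg (u' t), norm_nonneg (v' t),
      sq_nonneg (‖u' t‖ - ‖v' t‖), abs_nonneg (inner ℝ (u t) (v t) : ℝ)]
  -- dual: Riesz representative identity
  have hriesz : ∀ (t : ℝ) (f : StrongDual ℝ (X t)),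
      (InnerProductSpace.toDual ℝ (X t)).symm f =
        ContinuousLinearMap.adjoint (((P.φ t).symm : X t →L[ℝ] X 0))
          ((InnerProductSpace.toDual ℝ (X 0)).symm (P.pullDual t f)) := by
    intro t f
    apply ext_inner_right ℝ
    intro z
    rw [InnerProductSpace.toDual_symm_apply, ContinuousLinearMap.adjoint_inner_left,
      InnerProductSpace.toDual_symm_apply]
    show f z = (P.pullDual t f) ((P.φ t).symm z)
    simp [CompatiblePair.pullDual]
  have hdrw : ∀ (t : ℝ) (f g : StrongDual ℝ (X t)),
      dualInner f g = (inner ℝ ((InnerProductSpace.toDual ℝ (X 0)).symm (P.pullDual t f))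
        (Q₀ t ((InnerProductSpace.toDual ℝ (X 0)).symm (P.pullDual t g))) : ℝ) := by
    intro t f g
    show (inner ℝ ((InnerProductSpace.toDual ℝ (X t)).symm f)
      ((InnerProductSpace.toDual ℝ (X t)).symm g) : ℝ) = _
    rw [hriesz t f, hriesz t g, hQinner]
  -- dual integrability
  have dual_int : ∀ (f g : ∀ t, StrongDual ℝ (X t)), P.MemL2Xstar f → P.MemL2Xstar g →
      Integrable (fun t => dualInner (f t) (g t)) μ := by
    intro f g hf hg
    set F : ℝ → StrongDual ℝ (X 0) := fun t => P.pullDual t (f t) with hF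
    set G : ℝ → StrongDual ℝ (X 0) := fun t => P.pullDual t (g t) with hGd
    set a : ℝ → X 0 := fun t => (InnerProductSpace.toDual ℝ (X 0)).symm (F t) with ha
    set b : ℝ → X 0 := fun t => (InnerProductSpace.toDual ℝ (X 0)).symm (G t) with hb
    have hFae : AEStronglyMeasurable F μ := hf.1
    have hGae : AEStronglyMeasurable G μ := hg.1
    have haae : AEStronglyMeasurable a μ :=
      (InnerProductSpace.toDual ℝ (X 0)).symm.continuous.comp_aestronglyMeasurable hFae
    have hbae : AEStronglyMeasurable b μ :=
      (InnerProductSpace.toDual ℝ (X 0)).symm.continuous.comp_aestronglyMeasurable hGae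
    have hrw2 : ∀ t ∈ Ioc (0:ℝ) T, dualInner (f t) (g t) = (inner ℝ (a t) (Q t (b t)) : ℝ) := by
      intro t ht
      rw [hdrw t (f t) (g t), hQdef]
      show _ = (inner ℝ (a t) (Q₀ (π t) (b t)) : ℝ)
      rw [hπeq t ht]
    have hsm : StronglyMeasurable fun t =>
        (inner ℝ (haae.mk a t) (Q t (hbae.mk b t)) : ℝ) :=
      haae.stronglyMeasurable_mk.inner (comp_meas hQmeas hbae.stronglyMeasurable_mk)
    have haesm : AEStronglyMeasurable (fun t => dualInner (f t) (g t)) μ := by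
      refine hsm.aestronglyMeasurable.congr ?_
      filter_upwards [haae.ae_eq_mk, hbae.ae_eq_mk, ae_restrict_mem measurableSet_Ioc]
        with t h1 h2 ht
      rw [hrw2 t ht, h1, h2]
    have hbd : Integrable (fun t => P.C ^ 2 / 2 * (‖F t‖ ^ 2 + ‖G t‖ ^ 2)) μ :=
      ((hf.norm.integrable_sq).add (hg.norm.integrable_sq)).const_mul _
    refine hbd.mono' haesm ?_
    filter_upwards [ae_restrict_mem measurableSet_Ioc] with t ht
    have hfn : ‖f t‖ ≤ P.C * ‖F t‖ := by
      refine ContinuousLinearMap.opNorm_le_bound _ (by have := P.C_pos; positivity) fun y => ?_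
      have h1 : f t y = F t ((P.φ t).symm y) := by
        simp [hF, CompatiblePair.pullDual]
      rw [h1]
      calc ‖F t ((P.φ t).symm y)‖ ≤ ‖F t‖ * ‖(P.φ t).symm y‖ :=
            (F t).le_opNorm _
        _ ≤ ‖F t‖ * (P.C * ‖y‖) := by
            exact mul_le_mul_of_nonneg_left
              (P.norm_symm_le t (Ioc_subset_Icc_self ht) y) (norm_nonneg _)
        _ = P.C * ‖F t‖ * ‖y‖ := by ring
    have hgn : ‖g t‖ ≤ P.C * ‖G t‖ := by
      refine ContinuousLinearMap.opNorm_le_bound _ (by have := P.C_pos; positivity) fun y => ?_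
      have h1 : g t y = G t ((P.φ t).symm y) := by
        simp [hGd, CompatiblePair.pullDual]
      rw [h1]
      calc ‖G t ((P.φ t).symm y)‖ ≤ ‖G t‖ * ‖(P.φ t).symm y‖ :=
            (G t).le_opNorm _
        _ ≤ ‖G t‖ * (P.C * ‖y‖) := by
            exact mul_le_mul_of_nonneg_left
              (P.norm_symm_le t (Ioc_subset_Icc_self ht) y) (norm_nonneg _)
        _ = P.C * ‖G t‖ * ‖y‖ := by ring
    have h2 : |dualInner (f t) (g t)| ≤ ‖f t‖ * ‖g t‖ := by
      rw [dualInner]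
      calc |(inner ℝ ((InnerProductSpace.toDual ℝ (X t)).symm (f t))
          ((InnerProductSpace.toDual ℝ (X t)).symm (g t)) : ℝ)|
          ≤ ‖(InnerProductSpace.toDual ℝ (X t)).symm (f t)‖ *
            ‖(InnerProductSpace.toDual ℝ (X t)).symm (g t)‖ := abs_real_inner_le_norm _ _
        _ = ‖f t‖ * ‖g t‖ := by rw [LinearIsometryEquiv.norm_map, LinearIsometryEquiv.norm_map]
    rw [Real.norm_eq_abs]
    have hC := P.C_pos
    nlinarith [norm_nonneg (f t), norm_nonneg (g t), norm_nonneg (F t), norm_nonneg (G t),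
      sq_nonneg (‖F t‖ - ‖G t‖), abs_nonneg (dualInner (f t) (g t))]
  refine ⟨⟨?_, ?_, ?_, ?_, ?_, ?_⟩, ?_, ?_, ?_, ?_, ?_, ?_⟩
  · -- primal integrability
    intro u v hu hv
    exact primal_int u v hu hv
  · -- primal symmetry
    intro u v _ _
    exact congrArg _ (funext fun t => real_inner_comm _ _)
  · -- primal additivity
    intro u₁ u₂ v h1 h2 h3
    have heq : (fun t => (inner ℝ (u₁ t + u₂ t) (v t) : ℝ))
        = fun t => (inner ℝ (u₁ t) (v t) : ℝ) + inner ℝ (u₂ t) (v t) :=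
      funext fun t => inner_add_left _ _ _
    rw [heq]
    exact integral_add (primal_int u₁ v h1 h3) (primal_int u₂ v h2 h3)
  · -- primal homogeneity
    intro c u v _ _
    have heq : (fun t => (inner ℝ (c • u t) (v t) : ℝ))
        = fun t => c * inner ℝ (u t) (v t) :=
      funext fun t => real_inner_smul_left _ _ _
    rw [heq]
    exact integral_const_mul c _
  · -- primal nonnegativity
    intro u _
    exact integral_nonneg fun t => real_inner_self_nonneg
  · -- primal definiteness
    intro u hu h0
    have hi := primal_int u u hu hu
    have hz := (integral_eq_zero_iff_of_nonneg_ae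
      (Eventually.of_forall fun t => real_inner_self_nonneg) hi).1 h0
    filter_upwards [hz] with t ht
    exact inner_self_eq_zero.1 ht
  · -- dual integrability
    intro f g hf hg
    exact dual_int f g hf hg
  · -- dual symmetry
    intro f g _ _
    exact congrArg _ (funext fun t => dualInner_comm' _ _)
  · -- dual additivity
    intro f₁ f₂ g h1 h2 h3
    have heq : (fun t => dualInner (f₁ t + f₂ t) (g t))
        = fun t => dualInner (f₁ t) (g t) + dualInner (f₂ t) (g t) :=
      funext fun t => dualInner_add_left' _ _ _
    rw [heq]
    exact integral_add (dual_int f₁ g h1 h3) (dual_int f₂ g h2 h3)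
  · -- dual homogeneity
    intro c f g _ _
    have heq : (fun t => dualInner (c • f t) (g t))
        = fun t => c * dualInner (f t) (g t) :=
      funext fun t => dualInner_smul_left' _ _ _
    rw [heq]
    exact integral_const_mul c _
  · -- dual nonnegativity
    intro f _
    exact integral_nonneg fun t => dualInner_self_nonneg' _
  · -- dual definiteness
    intro f hf h0
    have hi := dual_int f f hf hf
    have hz := (integral_eq_zero_iff_of_nonneg_ae
      (Eventually.of_forall fun t => dualInner_self_nonneg' _) hi).1 h0
    filter_upwards [hz] with t ht
    exact (dualInner_self_eq_zero' _).1 ht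
end
end

section
/- Let (X,(φ_t)_{t∈[0,T]}) be a compatible pair. Then L²_X, equipped with the inner product (u,v)_{L²_X} = ∫₀ᵀ (u(t), v(t))_{X(t)} dt, is a separable Hilbert space (in particular it is complete), and likewise L²_{X*}, equipped with (f,g)_{L²_{X*}} = ∫₀ᵀ (f(t), g(t))_{X(t)*} dt, is a separable Hilbert space. -/
open MeasureTheory Set Filter Topology

noncomputable section

variable {T : ℝ} {X : ℝ → Type*} [∀ t, NormedAddCommGroup (X t)]
  [∀ t, InnerProductSpace ℝ (X t)]

open scoped ENNReal NNReal

namespace Stmt4Aux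

lemma contOn_max {f g : ℝ → ℝ} {s : Set ℝ} (hf : ContinuousOn f s) (hg : ContinuousOn g s) :
    ContinuousOn (fun t => max (f t) (g t)) s :=
  ContinuousOn.sup hf hg


/-- Abstract frame: a family of spaces `Y t` each identified with a fixed space `E`
by maps `p t / q t` that are mutually inverse, subtraction-preserving, uniformly
bi-bounded on `[0,T]`, with `t ↦ ‖q t e‖` a.e. strongly measurable. -/
structure AuxFrame (T : ℝ) (Y : ℝ → Type*) [∀ t, NormedAddCommGroup (Y t)]
    (E : Type*) [NormedAddCommGroup E] where
  p : ∀ t, Y t → E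
  q : ∀ t, E → Y t
  hqp : ∀ t y, q t (p t y) = y
  hpq : ∀ t e, p t (q t e) = e
  hp_sub : ∀ t (y y' : Y t), p t (y - y') = p t y - p t y'
  hq_sub : ∀ t (e e' : E), q t (e - e') = q t e - q t e'
  C : ℝ
  hC : 0 < C
  hp_norm : ∀ t ∈ Icc (0:ℝ) T, ∀ y : Y t, ‖p t y‖ ≤ C * ‖y‖
  hq_norm : ∀ t ∈ Icc (0:ℝ) T, ∀ e : E, ‖q t e‖ ≤ C * ‖e‖
  hmeas : ∀ e : E, AEStronglyMeasurable (fun t => ‖q t e‖) (volume.restrict (Ioc (0:ℝ) T))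

variable {T : ℝ} {Y : ℝ → Type*} [∀ t, NormedAddCommGroup (Y t)]
  {E : Type*} [NormedAddCommGroup E]

lemma AuxFrame.q_zero (F : AuxFrame T Y E) (t : ℝ) : F.q t 0 = 0 := by
  have h := F.hq_sub t 0 0
  simpa using h

lemma AuxFrame.norm_sub_eq (F : AuxFrame T Y E) (t : ℝ) (y : Y t) (e : E) :
    ‖y - F.q t e‖ = ‖F.q t (F.p t y - e)‖ := by
  rw [F.hq_sub, F.hqp]

lemma AuxFrame.meas_simple (F : AuxFrame T Y E) (s : SimpleFunc ℝ E) :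
    AEStronglyMeasurable (fun t => ‖F.q t (s t)‖) (volume.restrict (Ioc (0:ℝ) T)) := by
  induction s using SimpleFunc.induction with
  | @const c A hA =>
    have heq : (fun t => ‖F.q t ((SimpleFunc.piecewise A hA (SimpleFunc.const ℝ c)
        (SimpleFunc.const ℝ 0)) t)‖) = A.indicator (fun t => ‖F.q t c‖) := by
      funext t
      by_cases h : t ∈ A <;>
        simp [SimpleFunc.piecewise_apply, h, Set.indicator, F.q_zero]
    rw [heq]
    exact (F.hmeas c).indicator hA
  | @add f g hdisj hf hg =>
    have heq : (fun t => ‖F.q t ((f + g) t)‖)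
        = fun t => ‖F.q t (f t)‖ + ‖F.q t (g t)‖ := by
      funext t
      by_cases h : f t = 0
      · simp [SimpleFunc.coe_add, h, F.q_zero]
      · have hg0 : g t = 0 := by
          by_contra h2
          exact Set.disjoint_left.1 hdisj (Function.mem_support.2 h) (Function.mem_support.2 h2)
        simp [SimpleFunc.coe_add, hg0, F.q_zero]
    rw [heq]
    exact hf.add hg

lemma AuxFrame.meas (F : AuxFrame T Y E) {d : ℝ → E}
    (hd : AEStronglyMeasurable d (volume.restrict (Ioc (0:ℝ) T))) :
    AEStronglyMeasurable (fun t => ‖F.q t (d t)‖) (volume.restrict (Ioc (0:ℝ) T)) := by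
  obtain ⟨g, hg, hdg⟩ := hd
  have key : AEStronglyMeasurable (fun t => ‖F.q t (g t)‖) (volume.restrict (Ioc (0:ℝ) T)) := by
    refine aestronglyMeasurable_of_tendsto_ae atTop (fun k => F.meas_simple (hg.approx k)) ?_
    filter_upwards [ae_restrict_mem measurableSet_Ioc] with t ht
    have htIcc : t ∈ Icc (0:ℝ) T := Ioc_subset_Icc_self ht
    rw [tendsto_iff_dist_tendsto_zero]
    have hb : ∀ k, dist ‖F.q t (hg.approx k t)‖ ‖F.q t (g t)‖
        ≤ F.C * dist (hg.approx k t) (g t) := by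
      intro k
      rw [Real.dist_eq, dist_eq_norm]
      calc |‖F.q t (hg.approx k t)‖ - ‖F.q t (g t)‖|
          ≤ ‖F.q t (hg.approx k t) - F.q t (g t)‖ := abs_norm_sub_norm_le _ _
        _ = ‖F.q t (hg.approx k t - g t)‖ := by rw [F.hq_sub]
        _ ≤ F.C * ‖hg.approx k t - g t‖ := F.hq_norm t htIcc _
    have hlim : Tendsto (fun k => F.C * dist (hg.approx k t) (g t)) atTop (𝓝 0) := by
      have := (tendsto_iff_dist_tendsto_zero.1 (hg.tendsto_approx t)).const_mul F.C
      simpa using this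
    exact squeeze_zero (fun k => dist_nonneg) hb hlim
  refine key.congr ?_
  filter_upwards [hdg] with t ht
  rw [ht]

lemma sqrt_integral_eq {f : ℝ → E} {μ : Measure ℝ} (hf : MemLp f 2 μ) :
    Real.sqrt (∫ t, ‖f t‖ ^ 2 ∂μ) = ‖hf.toLp f‖ := by
  rw [Lp.norm_toLp, hf.eLpNorm_eq_integral_rpow_norm two_ne_zero ENNReal.ofNat_ne_top]
  have h2 : (2:ℝ≥0∞).toReal = 2 := by simp
  rw [h2]
  have hnn : (0:ℝ) ≤ (∫ a, ‖f a‖ ^ (2:ℝ) ∂μ) ^ (2:ℝ)⁻¹ :=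
    Real.rpow_nonneg (integral_nonneg fun t => Real.rpow_nonneg (norm_nonneg _) _) _
  rw [ENNReal.toReal_ofReal hnn]
  have hpow : ∀ x : ℝ, x ^ (2:ℝ) = x ^ (2:ℕ) := fun x => by
    rw [← Real.rpow_natCast x 2]; norm_num
  simp_rw [hpow]
  rw [show (2:ℝ)⁻¹ = 1/2 by norm_num, ← Real.sqrt_eq_rpow]

lemma norm_toLp_sub {f g : ℝ → E} {μ : Measure ℝ} (hf : MemLp f 2 μ) (hg : MemLp g 2 μ) :
    ‖hf.toLp f - hg.toLp g‖ = Real.sqrt (∫ t, ‖f t - g t‖ ^ 2 ∂μ) := by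
  rw [← MemLp.toLp_sub hf hg, ← sqrt_integral_eq (hf.sub hg)]
  simp [Pi.sub_apply]

/-- The central two-sided estimate. -/
lemma AuxFrame.sqrt_est (F : AuxFrame T Y E) {u : ∀ t, Y t} {w : ℝ → E}
    (hu : MemLp (fun t => F.p t (u t)) 2 (volume.restrict (Ioc (0:ℝ) T)))
    (hw : MemLp w 2 (volume.restrict (Ioc (0:ℝ) T))) :
    Real.sqrt (∫ t in Ioc (0:ℝ) T, ‖u t - F.q t (w t)‖ ^ 2) ≤
      F.C * Real.sqrt (∫ t in Ioc (0:ℝ) T, ‖F.p t (u t) - w t‖ ^ 2) ∧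
    Real.sqrt (∫ t in Ioc (0:ℝ) T, ‖F.p t (u t) - w t‖ ^ 2) ≤
      F.C * Real.sqrt (∫ t in Ioc (0:ℝ) T, ‖u t - F.q t (w t)‖ ^ 2) := by
  set μ := volume.restrict (Ioc (0:ℝ) T) with hμdef
  -- pointwise identities and bounds
  have hid : ∀ t, ‖u t - F.q t (w t)‖ = ‖F.q t (F.p t (u t) - w t)‖ :=
    fun t => F.norm_sub_eq t (u t) (w t)
  have hbound1 : ∀ t ∈ Icc (0:ℝ) T,
      ‖u t - F.q t (w t)‖ ^ 2 ≤ F.C ^ 2 * ‖F.p t (u t) - w t‖ ^ 2 := by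
    intro t ht
    have h := F.hq_norm t ht (F.p t (u t) - w t)
    rw [hid t]
    calc ‖F.q t (F.p t (u t) - w t)‖ ^ 2 ≤ (F.C * ‖F.p t (u t) - w t‖) ^ 2 := by
          apply pow_le_pow_left₀ (norm_nonneg _) h
      _ = F.C ^ 2 * ‖F.p t (u t) - w t‖ ^ 2 := by ring
  have hbound2 : ∀ t ∈ Icc (0:ℝ) T,
      ‖F.p t (u t) - w t‖ ^ 2 ≤ F.C ^ 2 * ‖u t - F.q t (w t)‖ ^ 2 := by
    intro t ht
    have hrw : F.p t (u t) - w t = F.p t (u t - F.q t (w t)) := by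
      rw [F.hp_sub, F.hpq]
    have h := F.hp_norm t ht (u t - F.q t (w t))
    rw [hrw]
    calc ‖F.p t (u t - F.q t (w t))‖ ^ 2 ≤ (F.C * ‖u t - F.q t (w t)‖) ^ 2 := by
          apply pow_le_pow_left₀ (norm_nonneg _) h
      _ = F.C ^ 2 * ‖u t - F.q t (w t)‖ ^ 2 := by ring
  -- integrability
  have hPW : MemLp (fun t => F.p t (u t) - w t) 2 μ := hu.sub hw
  have hIB : Integrable (fun t => ‖F.p t (u t) - w t‖ ^ 2) μ := hPW.norm.integrable_sq
  have hAESM : AEStronglyMeasurable (fun t => ‖u t - F.q t (w t)‖ ^ 2) μ := by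
    have h1 : AEStronglyMeasurable (fun t => ‖F.q t (F.p t (u t) - w t)‖) μ :=
      F.meas hPW.aestronglyMeasurable
    have h2 : (fun t => ‖u t - F.q t (w t)‖ ^ 2)
        = fun t => ‖F.q t (F.p t (u t) - w t)‖ ^ 2 := by
      funext t; rw [hid t]
    rw [h2]
    exact h1.pow 2
  have hIA : Integrable (fun t => ‖u t - F.q t (w t)‖ ^ 2) μ := by
    refine Integrable.mono' (hIB.const_mul (F.C ^ 2)) hAESM ?_
    filter_upwards [ae_restrict_mem measurableSet_Ioc] with t ht
    rw [Real.norm_eq_abs, abs_of_nonneg (by positivity)]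
    exact hbound1 t (Ioc_subset_Icc_self ht)
  have hA0 : (0:ℝ) ≤ ∫ t, ‖u t - F.q t (w t)‖ ^ 2 ∂μ :=
    integral_nonneg fun t => by positivity
  have hB0 : (0:ℝ) ≤ ∫ t, ‖F.p t (u t) - w t‖ ^ 2 ∂μ :=
    integral_nonneg fun t => by positivity
  have hAB : (∫ t, ‖u t - F.q t (w t)‖ ^ 2 ∂μ)
      ≤ F.C ^ 2 * ∫ t, ‖F.p t (u t) - w t‖ ^ 2 ∂μ := by
    rw [← integral_const_mul]
    refine integral_mono_of_nonneg (ae_of_all _ fun t => by positivity)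
      (hIB.const_mul _) ?_
    filter_upwards [ae_restrict_mem measurableSet_Ioc] with t ht
    exact hbound1 t (Ioc_subset_Icc_self ht)
  have hBA : (∫ t, ‖F.p t (u t) - w t‖ ^ 2 ∂μ)
      ≤ F.C ^ 2 * ∫ t, ‖u t - F.q t (w t)‖ ^ 2 ∂μ := by
    rw [← integral_const_mul]
    refine integral_mono_of_nonneg (ae_of_all _ fun t => by positivity)
      (hIA.const_mul _) ?_
    filter_upwards [ae_restrict_mem measurableSet_Ioc] with t ht
    exact hbound2 t (Ioc_subset_Icc_self ht)
  constructor
  · calc Real.sqrt (∫ t, ‖u t - F.q t (w t)‖ ^ 2 ∂μ)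
        ≤ Real.sqrt (F.C ^ 2 * ∫ t, ‖F.p t (u t) - w t‖ ^ 2 ∂μ) := Real.sqrt_le_sqrt hAB
      _ = F.C * Real.sqrt (∫ t, ‖F.p t (u t) - w t‖ ^ 2 ∂μ) := by
          rw [Real.sqrt_mul (by positivity), Real.sqrt_sq F.hC.le]
  · calc Real.sqrt (∫ t, ‖F.p t (u t) - w t‖ ^ 2 ∂μ)
        ≤ Real.sqrt (F.C ^ 2 * ∫ t, ‖u t - F.q t (w t)‖ ^ 2 ∂μ) := Real.sqrt_le_sqrt hBA
      _ = F.C * Real.sqrt (∫ t, ‖u t - F.q t (w t)‖ ^ 2 ∂μ) := by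
          rw [Real.sqrt_mul (by positivity), Real.sqrt_sq F.hC.le]


theorem AuxFrame.complete [CompleteSpace E] (F : AuxFrame T Y E)
    (u : ℕ → ∀ t, Y t)
    (hmem : ∀ n, MemLp (fun t => F.p t (u n t)) 2 (volume.restrict (Ioc (0:ℝ) T)))
    (hcau : ∀ ε > (0:ℝ), ∃ N, ∀ m ≥ N, ∀ n ≥ N,
      Real.sqrt (∫ t in Ioc (0:ℝ) T, ‖u m t - u n t‖ ^ 2) < ε) :
    ∃ v : ∀ t, Y t, MemLp (fun t => F.p t (v t)) 2 (volume.restrict (Ioc (0:ℝ) T)) ∧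
      Tendsto (fun n => Real.sqrt (∫ t in Ioc (0:ℝ) T, ‖u n t - v t‖ ^ 2)) atTop
        (nhds 0) := by
  set μ := volume.restrict (Ioc (0:ℝ) T) with hμdef
  set W : ℕ → Lp E 2 μ := fun n => (hmem n).toLp _ with hW
  have hWcau : CauchySeq W := by
    rw [Metric.cauchySeq_iff]
    intro ε hε
    obtain ⟨N, hN⟩ := hcau (ε / F.C) (div_pos hε F.hC)
    refine ⟨N, fun m hm n hn => ?_⟩
    have h1 := (F.sqrt_est (hmem m) (hmem n)).2
    simp only [F.hqp] at h1
    have h2 : dist (W m) (W n)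
        = Real.sqrt (∫ t in Ioc (0:ℝ) T, ‖F.p t (u m t) - F.p t (u n t)‖ ^ 2) := by
      rw [dist_eq_norm, norm_toLp_sub (hmem m) (hmem n)]
    rw [h2]
    calc Real.sqrt (∫ t in Ioc (0:ℝ) T, ‖F.p t (u m t) - F.p t (u n t)‖ ^ 2)
        ≤ F.C * Real.sqrt (∫ t in Ioc (0:ℝ) T, ‖u m t - u n t‖ ^ 2) := h1
      _ < F.C * (ε / F.C) := by
          exact mul_lt_mul_of_pos_left (hN m hm n hn) F.hC
      _ = ε := mul_div_cancel₀ ε F.hC.ne'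
  obtain ⟨L, hL⟩ := cauchySeq_tendsto_of_complete hWcau
  set w : ℝ → E := ⇑L with hwdef
  have hwmem : MemLp w 2 μ := Lp.memLp L
  refine ⟨fun t => F.q t (w t), ?_, ?_⟩
  · have : (fun t => F.p t (F.q t (w t))) = w := funext fun t => F.hpq t (w t)
    rw [this]; exact hwmem
  · have hb : ∀ n, Real.sqrt (∫ t in Ioc (0:ℝ) T, ‖u n t - F.q t (w t)‖ ^ 2)
        ≤ F.C * dist (W n) L := by
      intro n
      have h1 := (F.sqrt_est (hmem n) hwmem).1
      have h2 : dist (W n) L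
          = Real.sqrt (∫ t in Ioc (0:ℝ) T, ‖F.p t (u n t) - w t‖ ^ 2) := by
        have hLL : hwmem.toLp w = L := Lp.toLp_coeFn L hwmem
        rw [dist_eq_norm, ← hLL, norm_toLp_sub (hmem n) hwmem]
      rw [h2]
      exact h1
    have hd : Tendsto (fun n => F.C * dist (W n) L) atTop (𝓝 0) := by
      have := (tendsto_iff_dist_tendsto_zero.1 hL).const_mul F.C
      simpa using this
    exact squeeze_zero (fun n => Real.sqrt_nonneg _) hb hd

theorem AuxFrame.separable [TopologicalSpace.SeparableSpace E] (F : AuxFrame T Y E) :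
    ∃ D : ℕ → ∀ t, Y t,
      (∀ n, MemLp (fun t => F.p t (D n t)) 2 (volume.restrict (Ioc (0:ℝ) T))) ∧
      ∀ u : ∀ t, Y t, MemLp (fun t => F.p t (u t)) 2 (volume.restrict (Ioc (0:ℝ) T)) →
        ∀ ε > (0:ℝ), ∃ n,
          Real.sqrt (∫ t in Ioc (0:ℝ) T, ‖u t - D n t‖ ^ 2) < ε := by
  set μ := volume.restrict (Ioc (0:ℝ) T) with hμdef
  haveI : Fact ((1:ℝ≥0∞) ≤ 2) := ⟨one_le_two⟩
  haveI : Fact ((2:ℝ≥0∞) ≠ ∞) := ⟨ENNReal.ofNat_ne_top⟩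
  haveI : Nonempty (Lp E 2 μ) := ⟨0⟩
  obtain ⟨g, hg⟩ := TopologicalSpace.exists_dense_seq (Lp E 2 μ)
  refine ⟨fun n => fun t => F.q t ((g n : ℝ → E) t), fun n => ?_, ?_⟩
  · have : (fun t => F.p t (F.q t ((g n : ℝ → E) t))) = ⇑(g n) :=
      funext fun t => F.hpq t _
    rw [this]; exact Lp.memLp (g n)
  · intro u hu ε hε
    obtain ⟨n, hn⟩ := hg.exists_dist_lt (hu.toLp _) (div_pos hε F.hC)
    refine ⟨n, ?_⟩
    have h1 := (F.sqrt_est hu (Lp.memLp (g n))).1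
    have h2 : dist (hu.toLp _) (g n)
        = Real.sqrt (∫ t in Ioc (0:ℝ) T, ‖F.p t (u t) - (g n : ℝ → E) t‖ ^ 2) := by
      rw [dist_eq_norm]
      conv_lhs => rw [← Lp.toLp_coeFn (g n) (Lp.memLp (g n))]
      rw [norm_toLp_sub hu (Lp.memLp (g n))]
    calc Real.sqrt (∫ t in Ioc (0:ℝ) T, ‖u t - F.q t ((g n : ℝ → E) t)‖ ^ 2)
        ≤ F.C * Real.sqrt (∫ t in Ioc (0:ℝ) T, ‖F.p t (u t) - (g n : ℝ → E) t‖ ^ 2) := h1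
      _ = F.C * dist (hu.toLp _) (g n) := by rw [h2]
      _ < F.C * (ε / F.C) := mul_lt_mul_of_pos_left hn F.hC
      _ = ε := mul_div_cancel₀ ε F.hC.ne'


def partialMax (f : ℕ → ℝ → ℝ) : ℕ → ℝ → ℝ
  | 0 => f 0
  | (N+1) => fun t => max (partialMax f N t) (f (N+1) t)

lemma partialMax_succ (f : ℕ → ℝ → ℝ) (N : ℕ) (t : ℝ) :
    partialMax f (N+1) t = max (partialMax f N t) (f (N+1) t) := rfl

lemma partialMax_continuousOn {f : ℕ → ℝ → ℝ} {s : Set ℝ}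
    (hf : ∀ n, ContinuousOn (f n) s) : ∀ N, ContinuousOn (partialMax f N) s
  | 0 => hf 0
  | (N+1) => contOn_max (partialMax_continuousOn hf N) (hf (N+1))

lemma le_partialMax (f : ℕ → ℝ → ℝ) (t : ℝ) : ∀ N n, n ≤ N → f n t ≤ partialMax f N t := by
  intro N
  induction N with
  | zero =>
    intro n hn
    rw [Nat.le_zero] at hn; subst hn; exact le_rfl
  | succ N ih =>
    intro n hn
    rcases eq_or_lt_of_le hn with h | h
    · subst h; rw [partialMax_succ]; exact le_max_right _ _
    · rw [partialMax_succ]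
      exact le_trans (ih n (Nat.lt_succ_iff.1 h)) (le_max_left _ _)

lemma partialMax_le {f : ℕ → ℝ → ℝ} {t : ℝ} {b : ℝ} (hb : ∀ n, f n t ≤ b) :
    ∀ N, partialMax f N t ≤ b
  | 0 => hb 0
  | (N+1) => max_le (partialMax_le hb N) (hb (N+1))

variable {T : ℝ} {X : ℝ → Type*} [∀ t, NormedAddCommGroup (X t)]
  [∀ t, InnerProductSpace ℝ (X t)]

lemma meas_pushDual [TopologicalSpace.SeparableSpace (X 0)]
    (P : CompatiblePair T X) (g : StrongDual ℝ (X 0)) :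
    AEStronglyMeasurable (fun t => ‖P.pushDual t g‖) (volume.restrict (Ioc (0:ℝ) T)) := by
  obtain ⟨D, hD⟩ := TopologicalSpace.exists_dense_seq (X 0)
  set f : ℕ → ℝ → ℝ := fun n t => |g (D n)| / ‖P.φ t (D n)‖ with hfdef
  have hfnonneg : ∀ n t, 0 ≤ f n t := fun n t => div_nonneg (abs_nonneg _) (norm_nonneg _)
  have hfc : ∀ n, ContinuousOn (f n) (Icc (0:ℝ) T) := by
    intro n
    by_cases h0 : D n = 0
    · have : f n = fun _ => 0 := by funext t; simp [hfdef, h0]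
      rw [this]; exact continuousOn_const
    · refine ContinuousOn.div continuousOn_const (P.continuous_norm (D n)) ?_
      intro t _
      simp only [ne_eq, norm_eq_zero]
      exact fun hc => h0 ((P.φ t).map_eq_zero_iff.1 hc)
  have hclaim1 : ∀ t n, f n t ≤ ‖P.pushDual t g‖ := by
    intro t n
    by_cases h0 : D n = 0
    · have : f n t = 0 := by simp [hfdef, h0]
      rw [this]; exact norm_nonneg _
    · have hpos : 0 < ‖P.φ t (D n)‖ := by
        rw [norm_pos_iff]
        exact fun hc => h0 ((P.φ t).map_eq_zero_iff.1 hc)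
      rw [hfdef]
      dsimp only
      rw [div_le_iff₀ hpos]
      have hval : g (D n) = (P.pushDual t g) (P.φ t (D n)) := by
        simp [CompatiblePair.pushDual]
      rw [hval]
      calc |(P.pushDual t g) (P.φ t (D n))| = ‖(P.pushDual t g) (P.φ t (D n))‖ :=
            (Real.norm_eq_abs _).symm
        _ ≤ ‖P.pushDual t g‖ * ‖P.φ t (D n)‖ := ContinuousLinearMap.le_opNorm _ _
  have hclaim2 : ∀ t, ∀ b : ℝ, 0 ≤ b → (∀ n, f n t ≤ b) → ‖P.pushDual t g‖ ≤ b := by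
    intro t b hb0 hb
    have key : ∀ x : X 0, |g x| ≤ b * ‖P.φ t x‖ := by
      intro x
      have hkey0 : ∀ n, |g (D n)| ≤ b * ‖P.φ t (D n)‖ := by
        intro n
        by_cases h0 : D n = 0
        · simp [h0]
        · have hpos : 0 < ‖P.φ t (D n)‖ := by
            rw [norm_pos_iff]
            exact fun hc => h0 ((P.φ t).map_eq_zero_iff.1 hc)
          exact (div_le_iff₀ hpos).1 (hb n)
      obtain ⟨c, hc_mem, hc_lim⟩ := mem_closure_iff_seq_limit.1 (hD x)
      have hle : ∀ k, |g (c k)| ≤ b * ‖P.φ t (c k)‖ := by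
        intro k
        obtain ⟨n, hn⟩ := hc_mem k
        rw [← hn]; exact hkey0 n
      have h1 : Tendsto (fun k => |g (c k)|) atTop (𝓝 |g x|) :=
        ((g.continuous.tendsto x).comp hc_lim).abs
      have h2 : Tendsto (fun k => b * ‖P.φ t (c k)‖) atTop (𝓝 (b * ‖P.φ t x‖)) :=
        ((((P.φ t).continuous.tendsto x).comp hc_lim).norm).const_mul b
      exact le_of_tendsto_of_tendsto' h1 h2 hle
    refine ContinuousLinearMap.opNorm_le_bound _ hb0 fun v => ?_
    have hx := key ((P.φ t).symm v)
    rw [(P.φ t).apply_symm_apply] at hx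
    calc ‖(P.pushDual t g) v‖ = |g ((P.φ t).symm v)| := by
          simp [CompatiblePair.pushDual, Real.norm_eq_abs]
      _ ≤ b * ‖v‖ := hx
  have hlub : ∀ t ∈ Icc (0:ℝ) T,
      IsLUB (Set.range fun N => partialMax f N t) ‖P.pushDual t g‖ := by
    intro t _
    constructor
    · rintro x ⟨N, rfl⟩
      exact partialMax_le (fun n => hclaim1 t n) N
    · intro b hb
      have hb0 : 0 ≤ b := le_trans (hfnonneg 0 t) (hb ⟨0, rfl⟩)
      refine hclaim2 t b hb0 fun n => ?_
      exact le_trans (le_partialMax f t n n le_rfl) (hb ⟨n, rfl⟩)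
  refine aestronglyMeasurable_of_tendsto_ae atTop
    (fun N => ((partialMax_continuousOn hfc N).mono Ioc_subset_Icc_self).aestronglyMeasurable
      measurableSet_Ioc) ?_
  filter_upwards [ae_restrict_mem measurableSet_Ioc] with t ht
  refine tendsto_atTop_isLUB (monotone_nat_of_le_succ fun N => ?_)
    (hlub t (Ioc_subset_Icc_self ht))
  rw [partialMax_succ]
  exact le_max_left _ _

/-- The primal frame. -/
def frameX (P : CompatiblePair T X) : AuxFrame T X (X 0) where
  p t y := (P.φ t).symm y
  q t e := P.φ t e
  hqp t y := (P.φ t).apply_symm_apply y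
  hpq t e := (P.φ t).symm_apply_apply e
  hp_sub t y y' := map_sub _ y y'
  hq_sub t e e' := map_sub _ e e'
  C := P.C
  hC := P.C_pos
  hp_norm := P.norm_symm_le
  hq_norm := P.norm_map_le
  hmeas e := ((P.continuous_norm e).mono Ioc_subset_Icc_self).aestronglyMeasurable
    measurableSet_Ioc

/-- The dual frame. -/
def frameXstar [TopologicalSpace.SeparableSpace (X 0)] (P : CompatiblePair T X) :
    AuxFrame T (fun t => StrongDual ℝ (X t)) (StrongDual ℝ (X 0)) where
  p t f := P.pullDual t f
  q t f := P.pushDual t f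
  hqp t f := by
    ext v; simp [CompatiblePair.pullDual, CompatiblePair.pushDual]
  hpq t f := by
    ext v; simp [CompatiblePair.pullDual, CompatiblePair.pushDual]
  hp_sub t f f' := by ext v; simp [CompatiblePair.pullDual]
  hq_sub t f f' := by ext v; simp [CompatiblePair.pushDual]
  C := P.C
  hC := P.C_pos
  hp_norm t ht f := by
    refine ContinuousLinearMap.opNorm_le_bound _
      (mul_nonneg P.C_pos.le (norm_nonneg f)) fun x => ?_
    calc ‖(P.pullDual t f) x‖ = ‖f (P.φ t x)‖ := by simp [CompatiblePair.pullDual]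
      _ ≤ ‖f‖ * ‖P.φ t x‖ := f.le_opNorm _
      _ ≤ ‖f‖ * (P.C * ‖x‖) :=
          mul_le_mul_of_nonneg_left (P.norm_map_le t ht x) (norm_nonneg f)
      _ = P.C * ‖f‖ * ‖x‖ := by ring
  hq_norm t ht f := by
    refine ContinuousLinearMap.opNorm_le_bound _
      (mul_nonneg P.C_pos.le (norm_nonneg f)) fun v => ?_
    calc ‖(P.pushDual t f) v‖ = ‖f ((P.φ t).symm v)‖ := by simp [CompatiblePair.pushDual]
      _ ≤ ‖f‖ * ‖(P.φ t).symm v‖ := f.le_opNorm _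
      _ ≤ ‖f‖ * (P.C * ‖v‖) :=
          mul_le_mul_of_nonneg_left (P.norm_symm_le t ht v) (norm_nonneg f)
      _ = P.C * ‖f‖ * ‖v‖ := by ring
  hmeas g := meas_pushDual P g

end Stmt4Aux

theorem stmt4 (T : ℝ) (hT : 0 < T) (X : ℝ → Type*) [∀ t, NormedAddCommGroup (X t)]
    [∀ t, InnerProductSpace ℝ (X t)] [∀ t, CompleteSpace (X t)]
    [∀ t, TopologicalSpace.SeparableSpace (X t)] (P : CompatiblePair T X) :
    -- `L²_X` is complete for the distance induced by its inner product norm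
    ((∀ u : ℕ → ∀ t, X t, (∀ n, P.MemL2X (u n)) →
      (∀ ε > (0:ℝ), ∃ N, ∀ m ≥ N, ∀ n ≥ N,
        Real.sqrt (∫ t in Ioc (0:ℝ) T, ‖u m t - u n t‖ ^ 2) < ε) →
      ∃ v : ∀ t, X t, P.MemL2X v ∧
        Tendsto (fun n => Real.sqrt (∫ t in Ioc (0:ℝ) T, ‖u n t - v t‖ ^ 2)) atTop
          (nhds 0)) ∧
    -- `L²_X` is separable
    (∃ D : ℕ → ∀ t, X t, (∀ n, P.MemL2X (D n)) ∧
      ∀ u : ∀ t, X t, P.MemL2X u → ∀ ε > (0:ℝ), ∃ n,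
        Real.sqrt (∫ t in Ioc (0:ℝ) T, ‖u t - D n t‖ ^ 2) < ε)) ∧
    -- `L²_{X*}` is complete
    ((∀ f : ℕ → ∀ t, StrongDual ℝ (X t), (∀ n, P.MemL2Xstar (f n)) →
      (∀ ε > (0:ℝ), ∃ N, ∀ m ≥ N, ∀ n ≥ N,
        Real.sqrt (∫ t in Ioc (0:ℝ) T, ‖f m t - f n t‖ ^ 2) < ε) →
      ∃ g : ∀ t, StrongDual ℝ (X t), P.MemL2Xstar g ∧
        Tendsto (fun n => Real.sqrt (∫ t in Ioc (0:ℝ) T, ‖f n t - g t‖ ^ 2)) atTop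
          (nhds 0)) ∧
    -- `L²_{X*}` is separable
    (∃ D : ℕ → ∀ t, StrongDual ℝ (X t), (∀ n, P.MemL2Xstar (D n)) ∧
      ∀ f : ∀ t, StrongDual ℝ (X t), P.MemL2Xstar f → ∀ ε > (0:ℝ), ∃ n,
        Real.sqrt (∫ t in Ioc (0:ℝ) T, ‖f t - D n t‖ ^ 2) < ε)) := by
  haveI : TopologicalSpace.SeparableSpace (StrongDual ℝ (X 0)) :=
    ((InnerProductSpace.toDual ℝ (X 0)).surjective.denseRange).separableSpace
      (InnerProductSpace.toDual ℝ (X 0)).continuous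
  refine ⟨⟨?_, ?_⟩, ?_, ?_⟩
  · exact (Stmt4Aux.frameX P).complete
  · exact (Stmt4Aux.frameX P).separable
  · exact (Stmt4Aux.frameXstar P).complete
  · exact (Stmt4Aux.frameXstar P).separable
end
end

section
/- Let (X,(φ_t)_{t∈[0,T]}) be a compatible pair. Suppose f(t) ∈ X(t)* for almost every t ∈ [0,T], ∫₀ᵀ ‖f(t)‖²_{X(t)*} dt < ∞, and for every u ∈ L²_X the map t ↦ ⟨f(t), u(t)⟩_{X(t)*, X(t)} is measurable on [0,T]. Then f ∈ L²_{X*}, i.e. t ↦ φ_t^* f(t) is strongly measurable and belongs to L²(0,T;X₀*). -/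
open MeasureTheory Set Filter Topology

noncomputable section

variable {T : ℝ} {X : ℝ → Type*} [∀ t, NormedAddCommGroup (X t)]
  [∀ t, InnerProductSpace ℝ (X t)]

/-- An orthonormal set in a separable metric space is countable. -/
lemma orthonormal_set_countable {E : Type*} [NormedAddCommGroup E] [InnerProductSpace ℝ E]
    [TopologicalSpace.SeparableSpace E] {w : Set E}
    (hw : Orthonormal ℝ ((↑) : w → E)) : Countable w := by
  obtain ⟨s, hs_count, hs_dense⟩ := TopologicalSpace.exists_countable_dense E
  have key : ∀ x : w, ∃ d ∈ s, dist (x : E) d < 1/2 := by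
    intro x
    have := Metric.dense_iff.mp hs_dense (x : E) (1/2) (by norm_num)
    obtain ⟨d, hd1, hd2⟩ := this
    exact ⟨d, hd2, Metric.mem_ball'.mp hd1⟩
  choose d hd_mem hd_lt using key
  have hdist : ∀ x y : w, x ≠ y → (1 : ℝ) ≤ dist (x : E) (y : E) := by
    intro x y hxy
    have h1 : ‖(x : E)‖ = 1 := hw.1 x
    have h2 : ‖(y : E)‖ = 1 := hw.1 y
    have h3 : (inner ℝ (x : E) (y : E) : ℝ) = 0 := hw.2 hxy
    have : ‖(x : E) - y‖ ^ 2 = 2 := by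
      rw [norm_sub_sq_real, h1, h2, h3]; ring
    have h4 : (1:ℝ) ≤ ‖(x : E) - y‖ ^ 2 := by rw [this]; norm_num
    rw [dist_eq_norm]
    nlinarith [norm_nonneg ((x : E) - y)]
  have hinj : Function.Injective fun x : w => (⟨d x, hd_mem x⟩ : s) := by
    intro x y hxy
    by_contra hne
    have h1 := hd_lt x
    have h2 := hd_lt y
    have : d x = d y := congrArg Subtype.val hxy
    have h3 : dist (x : E) (y : E) < 1 := by
      calc dist (x : E) (y : E) ≤ dist (x : E) (d x) + dist (d y) (y : E) := by
            rw [this]; exact dist_triangle _ _ _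
        _ < 1/2 + 1/2 := by rw [dist_comm (d y)]; linarith
        _ = 1 := by norm_num
    exact absurd (hdist x y hne) (not_le.mpr h3)
  haveI : Countable s := hs_count.to_subtype
  exact Function.Injective.countable hinj

/-- Pettis measurability theorem (AE version, separable complete real inner product codomain):
if all the "coordinates" `t ↦ ⟪F t, v⟫` are a.e.-measurable, then `F` is a.e. strongly
measurable. -/
lemma pettis_aestronglyMeasurable {α : Type*} [MeasurableSpace α] {μ : Measure α}
    {E : Type*} [NormedAddCommGroup E] [InnerProductSpace ℝ E] [CompleteSpace E]
    [TopologicalSpace.SeparableSpace E] {F : α → E}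
    (h : ∀ v : E, AEMeasurable (fun t => (inner ℝ (F t) v : ℝ)) μ) :
    AEStronglyMeasurable F μ := by
  obtain ⟨w, b, hb⟩ := exists_hilbertBasis ℝ E
  haveI : Countable w := orthonormal_set_countable (hb ▸ b.orthonormal)
  have hsum : ∀ t, HasSum (fun i : w => (inner ℝ (F t) (b i) : ℝ) • (b i : E)) (F t) := by
    intro t
    have := b.hasSum_repr (F t)
    convert this using 2 with i
    rw [b.repr_apply_apply, real_inner_comm]
  refine aestronglyMeasurable_of_tendsto_ae (atTop : Filter (Finset w))
    (f := fun s : Finset w => fun t => ∑ i ∈ s, (inner ℝ (F t) (b i) : ℝ) • (b i : E)) ?_ ?_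
  · intro s
    exact Finset.aestronglyMeasurable_fun_sum s fun i _ =>
      ((h (b i)).aestronglyMeasurable).smul_const (b i : E)
  · exact Eventually.of_forall fun t => (hsum t)
theorem stmt6 (T : ℝ) (hT : 0 < T) (X : ℝ → Type*) [∀ t, NormedAddCommGroup (X t)]
    [∀ t, InnerProductSpace ℝ (X t)] [∀ t, CompleteSpace (X t)]
    [∀ t, TopologicalSpace.SeparableSpace (X t)] (P : CompatiblePair T X)
    (f : ∀ t, StrongDual ℝ (X t))
    (hnorm : (∫⁻ t in Ioc (0:ℝ) T, (‖f t‖₊ : ENNReal) ^ 2) < ⊤)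
    (hmeas : ∀ u : ∀ t, X t, P.MemL2X u →
      AEMeasurable (fun t => f t (u t)) (volume.restrict (Ioc (0:ℝ) T))) :
    P.MemL2Xstar f := by
  set μ := volume.restrict (Ioc (0:ℝ) T) with hμ
  haveI : IsFiniteMeasure μ := by
    rw [hμ]
    exact ⟨by rw [Measure.restrict_apply_univ]; exact measure_Ioc_lt_top⟩
  -- Step 1: strong measurability via Pettis
  set F : ℝ → X 0 := fun t => (InnerProductSpace.toDual ℝ (X 0)).symm (P.pullDual t (f t))
    with hF
  have hFmeas : AEStronglyMeasurable F μ := by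
    apply pettis_aestronglyMeasurable
    intro v
    have hv : P.MemL2X (fun t => P.φ t v) := by
      unfold CompatiblePair.MemL2X
      have : (fun t => (P.φ t).symm (P.φ t v)) = fun _ => v := by
        funext t; simp
      rw [this]
      exact memLp_const (μ := volume.restrict (Ioc (0:ℝ) T)) v
    have := hmeas _ hv
    convert this using 2 with t
    case e'_4 => rfl
    rw [hF]
    simp only
    exact InnerProductSpace.toDual_symm_apply
  have hFmeas' : AEStronglyMeasurable (fun t => P.pullDual t (f t)) μ := by
    have : (fun t => P.pullDual t (f t)) =
        fun t => (InnerProductSpace.toDual ℝ (X 0)) (F t) := by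
      funext t; rw [hF]; simp
    rw [this]
    exact (InnerProductSpace.toDual ℝ (X 0)).continuous.comp_aestronglyMeasurable hFmeas
  -- Step 2: norm bound
  refine ⟨hFmeas', ?_⟩
  rw [eLpNorm_eq_lintegral_rpow_enorm_toReal (by norm_num) (by norm_num)]
  refine ENNReal.rpow_lt_top_of_nonneg (by norm_num) (ne_of_lt ?_)
  have h2r : (2:ENNReal).toReal = (2:ℝ) := by norm_num
  rw [h2r]
  have hbound : ∀ᵐ t ∂μ, (‖P.pullDual t (f t)‖₊ : ENNReal) ^ (2:ℝ)
      ≤ (‖P.C‖₊ : ENNReal) ^ 2 * (‖f t‖₊ : ENNReal) ^ 2 := by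
    rw [hμ]
    filter_upwards [ae_restrict_mem measurableSet_Ioc] with t ht
    have htI : t ∈ Icc (0:ℝ) T := Ioc_subset_Icc_self ht
    have hop : ‖(P.φ t : X 0 →L[ℝ] X t)‖ ≤ P.C :=
      ContinuousLinearMap.opNorm_le_bound _ P.C_pos.le (P.norm_map_le t htI)
    have h1 : ‖P.pullDual t (f t)‖ ≤ P.C * ‖f t‖ := by
      calc ‖P.pullDual t (f t)‖ ≤ ‖f t‖ * ‖(P.φ t : X 0 →L[ℝ] X t)‖ :=
            ContinuousLinearMap.opNorm_comp_le _ _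
        _ ≤ ‖f t‖ * P.C := by gcongr
        _ = P.C * ‖f t‖ := mul_comm _ _
    have h2 : ‖P.pullDual t (f t)‖₊ ≤ ‖P.C‖₊ * ‖f t‖₊ := by
      rw [← NNReal.coe_le_coe]
      push_cast
      have hC : ‖P.C‖ = P.C := by rw [Real.norm_eq_abs, abs_of_pos P.C_pos]
      rw [hC]
      exact h1
    calc (‖P.pullDual t (f t)‖₊ : ENNReal) ^ (2:ℝ)
        = (‖P.pullDual t (f t)‖₊ : ENNReal) ^ (2:ℕ) := by
          rw [← ENNReal.rpow_natCast]; norm_num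
      _ ≤ ((‖P.C‖₊ * ‖f t‖₊ : NNReal) : ENNReal) ^ (2:ℕ) := by
          exact_mod_cast pow_le_pow_left₀ (zero_le) h2 2
      _ = (‖P.C‖₊ : ENNReal) ^ 2 * (‖f t‖₊ : ENNReal) ^ 2 := by
          push_cast; ring
  calc ∫⁻ t, (‖P.pullDual t (f t)‖₊ : ENNReal) ^ (2:ℝ) ∂μ
      ≤ ∫⁻ t, (‖P.C‖₊ : ENNReal) ^ 2 * (‖f t‖₊ : ENNReal) ^ 2 ∂μ :=
        lintegral_mono_ae hbound
    _ = (‖P.C‖₊ : ENNReal) ^ 2 * ∫⁻ t, (‖f t‖₊ : ENNReal) ^ 2 ∂μ :=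
        lintegral_const_mul' _ _ (ENNReal.pow_ne_top ENNReal.coe_ne_top)
    _ < ⊤ := ENNReal.mul_lt_top (ENNReal.pow_lt_top ENNReal.coe_lt_top) hnorm
end
end

section
/- Let (X,(φ_t)_{t∈[0,T]}) be a compatible pair. Then the map J : L²_{X*} → (L²_X)* defined by ⟨Jf, u⟩ := ∫₀ᵀ ⟨f(t), u(t)⟩_{X(t)*, X(t)} dt is a linear isometric isomorphism of L²_{X*} onto the dual space (L²_X)*; hence (L²_X)* may be identified with L²_{X*} and the duality pairing of f ∈ L²_{X*} with u ∈ L²_X is ∫₀ᵀ ⟨f(t), u(t)⟩_{X(t)*, X(t)} dt. -/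
open MeasureTheory Set Filter Topology

noncomputable section

variable {T : ℝ} {X : ℝ → Type*} [∀ t, NormedAddCommGroup (X t)]
  [∀ t, InnerProductSpace ℝ (X t)]

set_option linter.unusedSectionVars false

namespace CompatiblePair

variable (P : CompatiblePair T X)

lemma norm_le_C_mul (t : ℝ) (ht : t ∈ Icc (0:ℝ) T) (v : X 0) :
    ‖v‖ ≤ P.C * ‖P.φ t v‖ := by
  have := P.norm_symm_le t ht (P.φ t v)
  simpa using this

lemma finite : IsFiniteMeasure (volume.restrict (Ioc (0:ℝ) T)) := by
  constructor
  rw [Measure.restrict_apply_univ]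
  simp [Real.volume_Ioc]

lemma aemeas_norm_const (v : X 0) :
    AEMeasurable (fun t => ‖P.φ t v‖) (volume.restrict (Ioc (0:ℝ) T)) := by
  have h : AEMeasurable (fun t => ‖P.φ t v‖) (volume.restrict (Icc (0:ℝ) T)) :=
    (P.continuous_norm v).aemeasurable measurableSet_Icc
  exact h.mono_measure (Measure.restrict_mono Ioc_subset_Icc_self le_rfl)

lemma aemeas_norm_simple (s : SimpleFunc ℝ (X 0)) :
    AEMeasurable (fun t => ‖P.φ t (s t)‖) (volume.restrict (Ioc (0:ℝ) T)) := by
  induction s using SimpleFunc.induction with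
  | const c hs =>
    rename_i A
    have : (fun t => ‖P.φ t ((SimpleFunc.piecewise A hs (SimpleFunc.const _ c)
        (SimpleFunc.const _ 0)) t)‖) = A.indicator (fun t => ‖P.φ t c‖) := by
      funext t
      by_cases ht : t ∈ A <;> simp [SimpleFunc.piecewise_apply, ht, Set.indicator]
    rw [this]
    exact (P.aemeas_norm_const c).indicator hs
  | add hdisj hf hg =>
    rename_i f g
    have : (fun t => ‖P.φ t ((f + g) t)‖)
        = fun t => ‖P.φ t (f t)‖ + ‖P.φ t (g t)‖ := by
      funext t
      rcases Classical.em (f t = 0) with h | h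
      · simp [h]
      · have hg0 : g t = 0 := by
          by_contra hg0
          exact Set.disjoint_left.mp hdisj (Function.mem_support.2 h)
            (Function.mem_support.2 hg0)
        simp [hg0]
    rw [this]
    exact hf.add hg

lemma aemeas_norm {g : ℝ → X 0}
    (hg : AEStronglyMeasurable g (volume.restrict (Ioc (0:ℝ) T))) :
    AEMeasurable (fun t => ‖P.φ t (g t)‖) (volume.restrict (Ioc (0:ℝ) T)) := by
  set g' := hg.mk g with hg'def
  have hgm : StronglyMeasurable g' := hg.stronglyMeasurable_mk
  have key : AEMeasurable (fun t => ‖P.φ t (g' t)‖) (volume.restrict (Ioc (0:ℝ) T)) := by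
    refine aemeasurable_of_tendsto_metrizable_ae atTop
      (fun n => P.aemeas_norm_simple (hgm.approx n)) ?_
    refine Eventually.of_forall fun t => ?_
    exact (((P.φ t).continuous.norm).tendsto (g' t)).comp (hgm.tendsto_approx t)
  refine key.congr ?_
  exact hg.ae_eq_mk.mono fun t ht => congrArg (fun x => ‖P.φ t x‖) ht.symm
  
lemma aemeas_inner {g g' : ℝ → X 0}
    (hg : AEStronglyMeasurable g (volume.restrict (Ioc (0:ℝ) T)))
    (hg' : AEStronglyMeasurable g' (volume.restrict (Ioc (0:ℝ) T))) :
    AEMeasurable (fun t => (inner ℝ (P.φ t (g t)) (P.φ t (g' t)) : ℝ))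
      (volume.restrict (Ioc (0:ℝ) T)) := by
  have : (fun t => (inner ℝ (P.φ t (g t)) (P.φ t (g' t)) : ℝ))
      = fun t => (‖P.φ t ((g + g') t)‖ * ‖P.φ t ((g + g') t)‖
          - ‖P.φ t (g t)‖ * ‖P.φ t (g t)‖ - ‖P.φ t (g' t)‖ * ‖P.φ t (g' t)‖) / 2 := by
    funext t
    rw [real_inner_eq_norm_add_mul_self_sub_norm_mul_self_sub_norm_mul_self_div_two]
    simp [map_add]
  rw [this]
  exact (((P.aemeas_norm (hg.add hg')).mul (P.aemeas_norm (hg.add hg'))).sub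
    ((P.aemeas_norm hg).mul (P.aemeas_norm hg))).sub
    ((P.aemeas_norm hg').mul (P.aemeas_norm hg')) |>.div_const 2

lemma memLp_norm_comp {g : ℝ → X 0}
    (hg : MemLp g 2 (volume.restrict (Ioc (0:ℝ) T))) :
    MemLp (fun t => ‖P.φ t (g t)‖) 2 (volume.restrict (Ioc (0:ℝ) T)) := by
  refine MemLp.of_le_mul (c := P.C) hg (P.aemeas_norm hg.1).aestronglyMeasurable ?_
  filter_upwards [ae_restrict_mem measurableSet_Ioc] with t ht
  simpa using P.norm_map_le t (Ioc_subset_Icc_self ht) (g t)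

lemma integrable_mul_of_memLp2 {a b : ℝ → ℝ}
    (ha : MemLp a 2 (volume.restrict (Ioc (0:ℝ) T)))
    (hb : MemLp b 2 (volume.restrict (Ioc (0:ℝ) T))) :
    Integrable (fun t => a t * b t) (volume.restrict (Ioc (0:ℝ) T)) := by
  have h := L2.integrable_inner (𝕜 := ℝ) (ha.toLp a) (hb.toLp b)
  refine h.congr ?_
  filter_upwards [ha.coeFn_toLp, hb.coeFn_toLp] with t h1 h2
  simp [h1, h2, RCLike.inner_apply, mul_comm]

lemma integral_mul_le_sqrt {a b : ℝ → ℝ}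
    (ha : MemLp a 2 (volume.restrict (Ioc (0:ℝ) T)))
    (hb : MemLp b 2 (volume.restrict (Ioc (0:ℝ) T))) :
    ∫ t in Ioc (0:ℝ) T, a t * b t
      ≤ Real.sqrt (∫ t in Ioc (0:ℝ) T, (a t)^2)
        * Real.sqrt (∫ t in Ioc (0:ℝ) T, (b t)^2) := by
  set A := ha.toLp a with hA
  set B := hb.toLp b with hB
  have hab : ∫ t in Ioc (0:ℝ) T, a t * b t = (inner ℝ A B : ℝ) := by
    rw [L2.inner_def]
    refine integral_congr_ae ?_
    filter_upwards [ha.coeFn_toLp, hb.coeFn_toLp] with t h1 h2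
    simp [hA, hB, h1, h2, RCLike.inner_apply, mul_comm]
  have ha2 : ∫ t in Ioc (0:ℝ) T, (a t)^2 = ‖A‖^2 := by
    rw [← real_inner_self_eq_norm_sq, L2.inner_def]
    refine integral_congr_ae ?_
    filter_upwards [ha.coeFn_toLp] with t h1
    simp [hA, h1, RCLike.inner_apply, sq]
  have hb2 : ∫ t in Ioc (0:ℝ) T, (b t)^2 = ‖B‖^2 := by
    rw [← real_inner_self_eq_norm_sq, L2.inner_def]
    refine integral_congr_ae ?_
    filter_upwards [hb.coeFn_toLp] with t h1
    simp [hB, h1, RCLike.inner_apply, sq]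
  rw [hab, ha2, hb2, Real.sqrt_sq (norm_nonneg A), Real.sqrt_sq (norm_nonneg B)]
  exact real_inner_le_norm A B

lemma integrable_eval {h : ℝ → StrongDual ℝ (X 0)} {g : ℝ → X 0}
    (hh : MemLp h 2 (volume.restrict (Ioc (0:ℝ) T)))
    (hg : MemLp g 2 (volume.restrict (Ioc (0:ℝ) T))) :
    Integrable (fun t => h t (g t)) (volume.restrict (Ioc (0:ℝ) T)) := by
  have hmeas : AEStronglyMeasurable (fun t => h t (g t))
      (volume.restrict (Ioc (0:ℝ) T)) := by
    have hcont : Continuous fun p : (StrongDual ℝ (X 0)) × (X 0) => p.1 p.2 :=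
      isBoundedBilinearMap_apply.continuous
    exact hcont.comp_aestronglyMeasurable (hh.1.prodMk hg.1)
  refine Integrable.mono' (g := fun t => ‖h t‖ * ‖g t‖)
    (integrable_mul_of_memLp2 hh.norm hg.norm) hmeas ?_
  exact Eventually.of_forall fun t => (h t).le_opNorm (g t)

lemma integrable_inner_comp {g g' : ℝ → X 0}
    (hg : MemLp g 2 (volume.restrict (Ioc (0:ℝ) T)))
    (hg' : MemLp g' 2 (volume.restrict (Ioc (0:ℝ) T))) :
    Integrable (fun t => (inner ℝ (P.φ t (g t)) (P.φ t (g' t)) : ℝ))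
      (volume.restrict (Ioc (0:ℝ) T)) := by
  refine Integrable.mono' (g := fun t => ‖P.φ t (g t)‖ * ‖P.φ t (g' t)‖)
    (integrable_mul_of_memLp2 (P.memLp_norm_comp hg) (P.memLp_norm_comp hg'))
    (P.aemeas_inner hg.1 hg'.1).aestronglyMeasurable ?_
  refine Eventually.of_forall fun t => ?_
  rw [Real.norm_eq_abs]
  exact abs_real_inner_le_norm _ _


-- parts 1-4
section Parts

variable [∀ t, CompleteSpace (X t)] [∀ t, TopologicalSpace.SeparableSpace (X t)]

lemma part1 {f : ∀ t, StrongDual ℝ (X t)} {u : ∀ t, X t}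
    (hf : P.MemL2Xstar f) (hu : P.MemL2X u) :
    Integrable (fun t => f t (u t)) (volume.restrict (Ioc (0:ℝ) T)) := by
  have key := integrable_eval (h := fun t => P.pullDual t (f t))
    (g := fun t => (P.φ t).symm (u t)) hf hu
  refine key.congr (Eventually.of_forall fun t => ?_)
  show P.pullDual t (f t) ((P.φ t).symm (u t)) = f t (u t)
  simp [CompatiblePair.pullDual]

lemma part2 {f g : ∀ t, StrongDual ℝ (X t)} (hf : P.MemL2Xstar f)
    (hg : P.MemL2Xstar g) {u : ∀ t, X t} (hu : P.MemL2X u) :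
    (∫ t in Ioc (0:ℝ) T, (f t + g t) (u t))
      = (∫ t in Ioc (0:ℝ) T, f t (u t)) + ∫ t in Ioc (0:ℝ) T, g t (u t) := by
  simp only [ContinuousLinearMap.add_apply]
  exact integral_add (P.part1 hf hu) (P.part1 hg hu)

lemma part3 (c : ℝ) {f : ∀ t, StrongDual ℝ (X t)} {u : ∀ t, X t} :
    (∫ t in Ioc (0:ℝ) T, (c • f t) (u t)) = c * ∫ t in Ioc (0:ℝ) T, f t (u t) := by
  simp only [ContinuousLinearMap.smul_apply, smul_eq_mul]
  exact integral_const_mul c _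

lemma push_pull (t : ℝ) (f : StrongDual ℝ (X t)) :
    P.pushDual t (P.pullDual t f) = f := by
  ext x
  simp [CompatiblePair.pushDual, CompatiblePair.pullDual]

lemma part4 {f : ∀ t, StrongDual ℝ (X t)} (hf : P.MemL2Xstar f)
    (hz : ∀ u : ∀ t, X t, P.MemL2X u → (∫ t in Ioc (0:ℝ) T, f t (u t)) = 0) :
    ∀ᵐ t ∂(volume.restrict (Ioc (0:ℝ) T)), f t = 0 := by
  set h := fun t => P.pullDual t (f t) with hhdef
  set r := fun t => (InnerProductSpace.toDual ℝ (X 0)).symm (h t) with hrdef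
  have hrmem : MemLp r 2 (volume.restrict (Ioc (0:ℝ) T)) :=
    ((InnerProductSpace.toDual ℝ (X 0)).symm.toContinuousLinearEquiv.toContinuousLinearMap).comp_memLp' hf
  have humem : P.MemL2X (fun t => P.φ t (r t)) := by
    show MemLp (fun t => (P.φ t).symm (P.φ t (r t))) 2 _
    simpa only [ContinuousLinearEquiv.symm_apply_apply] using hrmem
  have h0 := hz _ humem
  have heq : (fun t => f t (P.φ t (r t))) = fun t => ‖r t‖^2 := by
    funext t
    have e1 : f t (P.φ t (r t)) = h t (r t) := rfl
    rw [e1, ← InnerProductSpace.toDual_symm_apply]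
    show (inner ℝ (r t) (r t) : ℝ) = _
    exact real_inner_self_eq_norm_sq (r t)
  rw [heq] at h0
  have hint : Integrable (fun t => ‖r t‖^2) (volume.restrict (Ioc (0:ℝ) T)) :=
    (integrable_mul_of_memLp2 hrmem.norm hrmem.norm).congr
      (Eventually.of_forall fun t => (pow_two (‖r t‖)).symm)
  have hr0 : ∀ᵐ t ∂(volume.restrict (Ioc (0:ℝ) T)), r t = 0 := by
    have := (integral_eq_zero_iff_of_nonneg_ae
      (Eventually.of_forall fun t => sq_nonneg (‖r t‖)) hint).mp h0
    filter_upwards [this] with t ht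
    have : ‖r t‖^2 = 0 := ht
    simpa [pow_eq_zero_iff] using this
  filter_upwards [hr0] with t ht
  have hh0 : h t = 0 := by
    have he : h t = (InnerProductSpace.toDual ℝ (X 0)) (r t) :=
      ((InnerProductSpace.toDual ℝ (X 0)).apply_symm_apply (h t)).symm
    rw [he, ht]
    simp
  have : f t = P.pushDual t (h t) := (P.push_pull t (f t)).symm
  rw [this, hh0]
  ext x
  simp [CompatiblePair.pushDual]

end Parts

section Part5

variable [∀ t, CompleteSpace (X t)]

lemma memL2X_add {u v : ∀ t, X t} (hu : P.MemL2X u) (hv : P.MemL2X v) :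
    P.MemL2X (u + v) := by
  show MemLp (fun t => (P.φ t).symm (u t + v t)) 2 _
  simp only [map_add]
  exact hu.add hv

lemma memL2X_sub {u v : ∀ t, X t} (hu : P.MemL2X u) (hv : P.MemL2X v) :
    P.MemL2X (u - v) := by
  show MemLp (fun t => (P.φ t).symm (u t - v t)) 2 _
  simp only [map_sub]
  exact hu.sub hv

lemma F_congr (F : (∀ t, X t) → ℝ)
    (hadd : ∀ u v : ∀ t, X t, P.MemL2X u → P.MemL2X v → F (u + v) = F u + F v)
    {M : ℝ} (hM : ∀ u : ∀ t, X t, P.MemL2X u →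
      |F u| ≤ M * Real.sqrt (∫ t in Ioc (0:ℝ) T, ‖u t‖ ^ 2))
    {u v : ∀ t, X t} (hu : P.MemL2X u) (hv : P.MemL2X v)
    (huv : ∀ᵐ t ∂(volume.restrict (Ioc (0:ℝ) T)), u t = v t) : F u = F v := by
  have hd : P.MemL2X (u - v) := P.memL2X_sub hu hv
  have hz : F (u - v) = 0 := by
    have hi : (∫ t in Ioc (0:ℝ) T, ‖(u - v) t‖ ^ 2) = 0 := by
      rw [show (fun t => ‖(u - v) t‖ ^ 2) = fun t => ‖u t - v t‖ ^ 2 from rfl]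
      rw [integral_congr_ae (g := fun _ => (0:ℝ))
        (huv.mono fun t ht => by rw [ht]; simp)]
      simp
    have := hM _ hd
    rw [hi, Real.sqrt_zero, mul_zero] at this
    exact abs_eq_zero.mp (le_antisymm this (abs_nonneg _))
  have he : v + (u - v) = u := by funext t; simp
  have := hadd v (u - v) hv hd
  rw [he] at this
  rw [this, hz, add_zero]

lemma norm_Lp_sq (G : Lp (X 0) 2 (volume.restrict (Ioc (0:ℝ) T))) :
    (∫ t in Ioc (0:ℝ) T, ‖G t‖ ^ 2) = ‖G‖ ^ 2 := by
  have : ((inner ℝ G G : ℝ)) = ∫ t in Ioc (0:ℝ) T, (inner ℝ (G t) (G t) : ℝ) :=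
    L2.inner_def G G
  rw [← real_inner_self_eq_norm_sq G, this]
  exact (integral_congr_ae (Eventually.of_forall fun t => real_inner_self_eq_norm_sq (G t))).symm

lemma integrable_sq_norm_comp {g : ℝ → X 0}
    (hg : MemLp g 2 (volume.restrict (Ioc (0:ℝ) T))) :
    Integrable (fun t => ‖P.φ t (g t)‖ ^ 2) (volume.restrict (Ioc (0:ℝ) T)) :=
  (integrable_mul_of_memLp2 (P.memLp_norm_comp hg) (P.memLp_norm_comp hg)).congr
    (Eventually.of_forall fun t => (pow_two _).symm)

lemma integrable_sq_of_memLp2 {a : ℝ → ℝ}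
    (ha : MemLp a 2 (volume.restrict (Ioc (0:ℝ) T))) :
    Integrable (fun t => (a t) ^ 2) (volume.restrict (Ioc (0:ℝ) T)) :=
  (integrable_mul_of_memLp2 ha ha).congr (Eventually.of_forall fun t => (pow_two _).symm)

lemma int_sq_comp_le {g : ℝ → X 0}
    (hg : MemLp g 2 (volume.restrict (Ioc (0:ℝ) T))) :
    (∫ t in Ioc (0:ℝ) T, ‖P.φ t (g t)‖ ^ 2)
      ≤ P.C ^ 2 * ∫ t in Ioc (0:ℝ) T, ‖g t‖ ^ 2 := by
  rw [← integral_const_mul]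
  refine integral_mono_ae (P.integrable_sq_norm_comp hg)
    ((integrable_sq_of_memLp2 hg.norm).const_mul _) ?_
  filter_upwards [ae_restrict_mem measurableSet_Ioc] with t ht
  have h1 := P.norm_map_le t (Ioc_subset_Icc_self ht) (g t)
  calc ‖P.φ t (g t)‖ ^ 2 ≤ (P.C * ‖g t‖) ^ 2 := by
        refine pow_le_pow_left₀ (norm_nonneg _) h1 2
    _ = P.C ^ 2 * ‖g t‖ ^ 2 := by ring

lemma sqrt_int_comp_le (G : Lp (X 0) 2 (volume.restrict (Ioc (0:ℝ) T))) :
    Real.sqrt (∫ t in Ioc (0:ℝ) T, ‖P.φ t (G t)‖ ^ 2) ≤ P.C * ‖G‖ := by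
  have h2 := P.int_sq_comp_le (Lp.memLp G)
  rw [norm_Lp_sq G] at h2
  calc Real.sqrt (∫ t in Ioc (0:ℝ) T, ‖P.φ t (G t)‖ ^ 2)
      ≤ Real.sqrt (P.C ^ 2 * ‖G‖ ^ 2) := Real.sqrt_le_sqrt h2
    _ = P.C * ‖G‖ := by
        rw [← mul_pow, Real.sqrt_sq (mul_nonneg P.C_pos.le (norm_nonneg _))]

lemma memL2X_comp (G : Lp (X 0) 2 (volume.restrict (Ioc (0:ℝ) T))) :
    P.MemL2X (fun t => P.φ t (G t)) := by
  show MemLp (fun t => (P.φ t).symm (P.φ t (G t))) 2 _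
  simpa only [ContinuousLinearEquiv.symm_apply_apply] using Lp.memLp G

lemma part5 (F : (∀ t, X t) → ℝ)
    (hadd : ∀ u v : ∀ t, X t, P.MemL2X u → P.MemL2X v → F (u + v) = F u + F v)
    (hsmul : ∀ (c : ℝ) (u : ∀ t, X t), P.MemL2X u → F (c • u) = c * F u)
    (hbdd : ∃ M : ℝ, ∀ u : ∀ t, X t, P.MemL2X u →
      |F u| ≤ M * Real.sqrt (∫ t in Ioc (0:ℝ) T, ‖u t‖ ^ 2)) :
    ∃ f : ∀ t, StrongDual ℝ (X t), P.MemL2Xstar f ∧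
      ∀ u : ∀ t, X t, P.MemL2X u → F u = ∫ t in Ioc (0:ℝ) T, f t (u t) := by
  obtain ⟨M, hM⟩ := hbdd
  set M' := max M 0 with hM'def
  have hM' : ∀ u : ∀ t, X t, P.MemL2X u →
      |F u| ≤ M' * Real.sqrt (∫ t in Ioc (0:ℝ) T, ‖u t‖ ^ 2) := fun u hu =>
    (hM u hu).trans (mul_le_mul_of_nonneg_right (le_max_left _ _) (Real.sqrt_nonneg _))
  have hM'0 : 0 ≤ M' := le_max_right _ _
  set H := Lp (X 0) 2 (volume.restrict (Ioc (0:ℝ) T)) with hHdef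
  set Λ₀ : H → ℝ := fun G => F (fun t => P.φ t (G t)) with hΛ₀def
  have hcongr : ∀ (G : H) (g : ℝ → X 0), MemLp g 2 (volume.restrict (Ioc (0:ℝ) T)) →
      ((G : ℝ → X 0) =ᵐ[volume.restrict (Ioc (0:ℝ) T)] g) →
      Λ₀ G = F (fun t => P.φ t (g t)) := by
    intro G g hgmem hge
    refine P.F_congr F hadd hM' (P.memL2X_comp G) ?_ ?_
    · show MemLp (fun t => (P.φ t).symm (P.φ t (g t))) 2 _
      simpa only [ContinuousLinearEquiv.symm_apply_apply] using hgmem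
    · exact hge.mono fun t ht => by rw [ht]
  have hΛadd : ∀ G G' : H, Λ₀ (G + G') = Λ₀ G + Λ₀ G' := by
    intro G G'
    have h1 : Λ₀ (G + G')
        = F ((fun t => P.φ t (G t)) + fun t => P.φ t (G' t)) := by
      refine P.F_congr F hadd hM' (P.memL2X_comp (G + G'))
        (P.memL2X_add (P.memL2X_comp G) (P.memL2X_comp G')) ?_
      filter_upwards [Lp.coeFn_add G G'] with t ht
      show P.φ t ((G + G') t) = P.φ t (G t) + P.φ t (G' t)
      rw [ht]
      simp
    rw [h1, hadd _ _ (P.memL2X_comp G) (P.memL2X_comp G')]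
  have hΛsmul : ∀ (c : ℝ) (G : H), Λ₀ (c • G) = c * Λ₀ G := by
    intro c G
    have h1 : Λ₀ (c • G) = F (c • fun t => P.φ t (G t)) := by
      refine P.F_congr F hadd hM' (P.memL2X_comp (c • G)) ?_ ?_
      · show MemLp (fun t => (P.φ t).symm ((c • fun s => P.φ s (G s)) t)) 2 _
        simpa only [Pi.smul_apply, Pi.smul_def, _root_.map_smul,
          ContinuousLinearEquiv.symm_apply_apply] using (Lp.memLp G).const_smul c
      · filter_upwards [Lp.coeFn_smul c G] with t ht
        show P.φ t ((c • G) t) = c • P.φ t (G t)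
        rw [ht]
        simp
    rw [h1, hsmul c _ (P.memL2X_comp G)]
  have hΛbdd : ∀ G : H, |Λ₀ G| ≤ M' * P.C * ‖G‖ := by
    intro G
    refine (hM' _ (P.memL2X_comp G)).trans ?_
    rw [mul_assoc]
    exact mul_le_mul_of_nonneg_left (P.sqrt_int_comp_le G) hM'0
  set Λlin : H →ₗ[ℝ] ℝ :=
    { toFun := Λ₀, map_add' := hΛadd, map_smul' := fun c G => by
        simp only [RingHom.id_apply, smul_eq_mul]; exact hΛsmul c G }
  set Λ : H →L[ℝ] ℝ := Λlin.mkContinuous (M' * P.C)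
    (fun G => by rw [Real.norm_eq_abs]; exact hΛbdd G) with hΛdef
  set w := (InnerProductSpace.toDual ℝ H).symm Λ with hwdef
  have hw : ∀ G : H, (inner ℝ w G : ℝ) = Λ G := fun G =>
    InnerProductSpace.toDual_symm_apply
  refine ⟨fun t => P.pushDual t ((InnerProductSpace.toDual ℝ (X 0)) (w t)), ?_, ?_⟩
  · show MemLp
      (fun t => P.pullDual t (P.pushDual t ((InnerProductSpace.toDual ℝ (X 0)) (w t)))) 2 _
    have he : (fun t => P.pullDual t (P.pushDual t ((InnerProductSpace.toDual ℝ (X 0)) (w t))))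
        = fun t => (InnerProductSpace.toDual ℝ (X 0)) (w t) := by
      funext t
      ext x
      simp [CompatiblePair.pullDual, CompatiblePair.pushDual]
    rw [he]
    exact ((InnerProductSpace.toDual ℝ (X 0)).toContinuousLinearEquiv.toContinuousLinearMap).comp_memLp'
      (Lp.memLp w)
  · intro u hu
    have hg₀ : MemLp (fun t => (P.φ t).symm (u t)) 2 (volume.restrict (Ioc (0:ℝ) T)) := hu
    set G := hg₀.toLp _ with hGdef
    have hcoe : (G : ℝ → X 0) =ᵐ[volume.restrict (Ioc (0:ℝ) T)]
      fun t => (P.φ t).symm (u t) := MemLp.coeFn_toLp hg₀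
    have h1 : F u = Λ₀ G := by
      rw [hcongr G _ hg₀ hcoe]
      congr 1
      funext t
      simp
    have h2 : (Λ₀ G : ℝ) = (inner ℝ w G : ℝ) := (hw G).symm
    have h3 : ((inner ℝ w G : ℝ)) = ∫ t in Ioc (0:ℝ) T, (inner ℝ (w t) (G t) : ℝ) :=
      L2.inner_def w G
    rw [h1, h2, h3]
    refine integral_congr_ae ?_
    filter_upwards [hcoe] with t ht
    rw [ht]
    show (inner ℝ (w t) ((P.φ t).symm (u t)) : ℝ)
      = (P.pushDual t ((InnerProductSpace.toDual ℝ (X 0)) (w t))) (u t)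
    simp [CompatiblePair.pushDual, InnerProductSpace.toDual_apply_apply]

end Part5

section Part6

variable [∀ t, CompleteSpace (X t)] [∀ t, TopologicalSpace.SeparableSpace (X t)]

/-- The coercive bilinear form `B(G,G') = ∫ ⟪φ_t G(t), φ_t G'(t)⟫` on `L²(0,T;X₀)`. -/
def bform : Lp (X 0) 2 (volume.restrict (Ioc (0:ℝ) T)) →L[ℝ]
    Lp (X 0) 2 (volume.restrict (Ioc (0:ℝ) T)) →L[ℝ] ℝ := by
  have hBint : ∀ G G' : Lp (X 0) 2 (volume.restrict (Ioc (0:ℝ) T)),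
      Integrable (fun t => (inner ℝ (P.φ t (G t)) (P.φ t (G' t)) : ℝ))
        (volume.restrict (Ioc (0:ℝ) T)) := fun G G' =>
    P.integrable_inner_comp (Lp.memLp G) (Lp.memLp G')
  refine LinearMap.mkContinuous₂ (LinearMap.mk₂ ℝ
    (fun G G' => ∫ t in Ioc (0:ℝ) T, (inner ℝ (P.φ t (G t)) (P.φ t (G' t)) : ℝ))
    (fun G₁ G₂ G' => by
      rw [← integral_add (hBint G₁ G') (hBint G₂ G')]
      refine integral_congr_ae ?_
      filter_upwards [Lp.coeFn_add G₁ G₂] with t ht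
      show (inner ℝ (P.φ t ((G₁ + G₂ : Lp _ 2 _) t)) (P.φ t (G' t)) : ℝ) = _
      rw [ht]
      simp [inner_add_left])
    (fun c G G' => by
      show _ = c • _
      rw [smul_eq_mul, ← integral_const_mul]
      refine integral_congr_ae ?_
      filter_upwards [Lp.coeFn_smul c G] with t ht
      show (inner ℝ (P.φ t ((c • G : Lp _ 2 _) t)) (P.φ t (G' t)) : ℝ) = _
      rw [ht]
      simp [real_inner_smul_left])
    (fun G G₁ G₂ => by
      rw [← integral_add (hBint G G₁) (hBint G G₂)]
      refine integral_congr_ae ?_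
      filter_upwards [Lp.coeFn_add G₁ G₂] with t ht
      show (inner ℝ (P.φ t (G t)) (P.φ t ((G₁ + G₂ : Lp _ 2 _) t)) : ℝ) = _
      rw [ht]
      simp [inner_add_right])
    (fun c G G' => by
      show _ = c • _
      rw [smul_eq_mul, ← integral_const_mul]
      refine integral_congr_ae ?_
      filter_upwards [Lp.coeFn_smul c G'] with t ht
      show (inner ℝ (P.φ t (G t)) (P.φ t ((c • G' : Lp _ 2 _) t)) : ℝ) = _
      rw [ht]
      simp [real_inner_smul_right])) (P.C ^ 2) ?_
  intro G G'
  have h1 : ‖∫ t in Ioc (0:ℝ) T, (inner ℝ (P.φ t (G t)) (P.φ t (G' t)) : ℝ)‖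
      ≤ ∫ t in Ioc (0:ℝ) T, ‖P.φ t (G t)‖ * ‖P.φ t (G' t)‖ := by
    refine norm_integral_le_of_norm_le
      (integrable_mul_of_memLp2 (P.memLp_norm_comp (Lp.memLp G))
        (P.memLp_norm_comp (Lp.memLp G'))) ?_
    refine Eventually.of_forall fun t => ?_
    rw [Real.norm_eq_abs]
    exact abs_real_inner_le_norm _ _
  refine h1.trans ?_
  refine (integral_mul_le_sqrt (T := T) (P.memLp_norm_comp (Lp.memLp G))
    (P.memLp_norm_comp (Lp.memLp G'))).trans ?_
  calc Real.sqrt (∫ t in Ioc (0:ℝ) T, ‖P.φ t (G t)‖ ^ 2)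
        * Real.sqrt (∫ t in Ioc (0:ℝ) T, ‖P.φ t (G' t)‖ ^ 2)
      ≤ (P.C * ‖G‖) * (P.C * ‖G'‖) :=
        mul_le_mul (P.sqrt_int_comp_le G) (P.sqrt_int_comp_le G') (Real.sqrt_nonneg _)
          (mul_nonneg P.C_pos.le (norm_nonneg _))
    _ = P.C ^ 2 * ‖G‖ * ‖G'‖ := by ring

lemma bform_apply (G G' : Lp (X 0) 2 (volume.restrict (Ioc (0:ℝ) T))) :
    P.bform G G' = ∫ t in Ioc (0:ℝ) T, (inner ℝ (P.φ t (G t)) (P.φ t (G' t)) : ℝ) := rfl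

lemma bform_coercive : IsCoercive P.bform := by
  refine ⟨(P.C ^ 2)⁻¹, inv_pos.2 (pow_pos P.C_pos 2), fun G => ?_⟩
  have e1 : P.bform G G = ∫ t in Ioc (0:ℝ) T, ‖P.φ t (G t)‖ ^ 2 := by
    rw [P.bform_apply]
    exact integral_congr_ae (Eventually.of_forall fun t => real_inner_self_eq_norm_sq _)
  have e2 : (P.C ^ 2)⁻¹ * ‖G‖ * ‖G‖
      = ∫ t in Ioc (0:ℝ) T, (P.C ^ 2)⁻¹ * ‖G t‖ ^ 2 := by
    rw [integral_const_mul, mul_assoc, ← pow_two, norm_Lp_sq G]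
  rw [e1, e2]
  refine integral_mono_ae ((integrable_sq_of_memLp2 (Lp.memLp G).norm).const_mul _)
    (P.integrable_sq_norm_comp (Lp.memLp G)) ?_
  filter_upwards [ae_restrict_mem measurableSet_Ioc] with t ht
  rw [inv_mul_le_iff₀ (pow_pos P.C_pos 2)]
  calc ‖G t‖ ^ 2 ≤ (P.C * ‖P.φ t (G t)‖) ^ 2 :=
        pow_le_pow_left₀ (norm_nonneg _) (P.norm_le_C_mul t (Ioc_subset_Icc_self ht) _) 2
    _ = P.C ^ 2 * ‖P.φ t (G t)‖ ^ 2 := by ring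

/-- The functional `G ↦ ∫ ⟨f(t), φ_t G(t)⟩` on `L²(0,T;X₀)`. -/
def phiFunc {f : ∀ t, StrongDual ℝ (X t)} (hf : P.MemL2Xstar f) :
    Lp (X 0) 2 (volume.restrict (Ioc (0:ℝ) T)) →L[ℝ] ℝ := by
  have hΦint : ∀ G : Lp (X 0) 2 (volume.restrict (Ioc (0:ℝ) T)),
      Integrable (fun t => P.pullDual t (f t) (G t)) (volume.restrict (Ioc (0:ℝ) T)) :=
    fun G => integrable_eval hf (Lp.memLp G)
  refine LinearMap.mkContinuous
    { toFun := fun G => ∫ t in Ioc (0:ℝ) T, P.pullDual t (f t) (G t),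
      map_add' := fun G G' => by
        rw [← integral_add (hΦint G) (hΦint G')]
        refine integral_congr_ae ?_
        filter_upwards [Lp.coeFn_add G G'] with t ht
        show P.pullDual t (f t) ((G + G' : Lp _ 2 _) t) = _
        rw [ht]
        simp
      map_smul' := fun c G => by
        simp only [RingHom.id_apply, smul_eq_mul]
        rw [← integral_const_mul]
        refine integral_congr_ae ?_
        filter_upwards [Lp.coeFn_smul c G] with t ht
        show P.pullDual t (f t) ((c • G : Lp _ 2 _) t) = _
        rw [ht]
        simp }
    (Real.sqrt (∫ t in Ioc (0:ℝ) T, ‖P.pullDual t (f t)‖ ^ 2)) ?_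
  intro G
  have h1 : ‖∫ t in Ioc (0:ℝ) T, P.pullDual t (f t) (G t)‖
      ≤ ∫ t in Ioc (0:ℝ) T, ‖P.pullDual t (f t)‖ * ‖G t‖ := by
    refine norm_integral_le_of_norm_le
      (integrable_mul_of_memLp2 hf.norm (Lp.memLp G).norm) ?_
    exact Eventually.of_forall fun t => (P.pullDual t (f t)).le_opNorm _
  refine h1.trans ((integral_mul_le_sqrt hf.norm (Lp.memLp G).norm).trans ?_)
  rw [norm_Lp_sq G, Real.sqrt_sq (norm_nonneg G)]

lemma phiFunc_apply {f : ∀ t, StrongDual ℝ (X t)} (hf : P.MemL2Xstar f)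
    (G : Lp (X 0) 2 (volume.restrict (Ioc (0:ℝ) T))) :
    P.phiFunc hf G = ∫ t in Ioc (0:ℝ) T, P.pullDual t (f t) (G t) := rfl

/-- The representing element of `f` in `L²(0,T;X₀)` through the bilinear form. -/
def gstar {f : ∀ t, StrongDual ℝ (X t)} (hf : P.MemL2Xstar f) :
    Lp (X 0) 2 (volume.restrict (Ioc (0:ℝ) T)) :=
  P.bform_coercive.continuousLinearEquivOfBilin.symm
    ((InnerProductSpace.toDual ℝ
      (Lp (X 0) 2 (volume.restrict (Ioc (0:ℝ) T)))).symm (P.phiFunc hf))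

lemma gstar_spec {f : ∀ t, StrongDual ℝ (X t)} (hf : P.MemL2Xstar f)
    (G : Lp (X 0) 2 (volume.restrict (Ioc (0:ℝ) T))) :
    (∫ t in Ioc (0:ℝ) T, (inner ℝ (P.φ t (P.gstar hf t)) (P.φ t (G t)) : ℝ))
      = ∫ t in Ioc (0:ℝ) T, P.pullDual t (f t) (G t) := by
  have e1 : (inner ℝ (P.bform_coercive.continuousLinearEquivOfBilin (P.gstar hf)) G : ℝ)
      = P.bform (P.gstar hf) G :=
    P.bform_coercive.continuousLinearEquivOfBilin_apply (P.gstar hf) G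
  rw [CompatiblePair.gstar, ContinuousLinearEquiv.apply_symm_apply,
    InnerProductSpace.toDual_symm_apply] at e1
  rw [← P.bform_apply, ← P.phiFunc_apply hf]
  exact e1.symm

lemma gstar_repr {f : ∀ t, StrongDual ℝ (X t)} (hf : P.MemL2Xstar f) :
    ∀ᵐ t ∂(volume.restrict (Ioc (0:ℝ) T)),
      f t = (InnerProductSpace.toDual ℝ (X t)) (P.φ t (P.gstar hf t)) := by
  haveI hfin : IsFiniteMeasure (volume.restrict (Ioc (0:ℝ) T)) := finite
  have hψ : ∀ v : X 0, (fun t => (inner ℝ (P.φ t (P.gstar hf t)) (P.φ t v) : ℝ)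
      - P.pullDual t (f t) v) =ᵐ[volume.restrict (Ioc (0:ℝ) T)] 0 := by
    intro v
    have hint1 : Integrable (fun t => (inner ℝ (P.φ t (P.gstar hf t)) (P.φ t v) : ℝ))
        (volume.restrict (Ioc (0:ℝ) T)) :=
      P.integrable_inner_comp (Lp.memLp (P.gstar hf)) (memLp_const v)
    have hint2 : Integrable (fun t => P.pullDual t (f t) v)
        (volume.restrict (Ioc (0:ℝ) T)) := integrable_eval hf (memLp_const v)
    refine Integrable.ae_eq_zero_of_forall_setIntegral_eq_zero (hint1.sub hint2) ?_
    intro A hA _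
    have hgA : MemLp (A.indicator (fun _ => v)) 2 (volume.restrict (Ioc (0:ℝ) T)) :=
      (memLp_const v).indicator hA
    have hcoe : (hgA.toLp _ : ℝ → X 0) =ᵐ[volume.restrict (Ioc (0:ℝ) T)]
        A.indicator (fun _ => v) := MemLp.coeFn_toLp hgA
    have e1 : (∫ t in Ioc (0:ℝ) T,
          (inner ℝ (P.φ t (P.gstar hf t)) (P.φ t (hgA.toLp _ t)) : ℝ))
        = ∫ t in A, (inner ℝ (P.φ t (P.gstar hf t)) (P.φ t v) : ℝ)
            ∂(volume.restrict (Ioc (0:ℝ) T)) := by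
      rw [← integral_indicator hA]
      refine integral_congr_ae ?_
      filter_upwards [hcoe] with t ht
      rw [ht]
      by_cases htA : t ∈ A
      · simp [Set.indicator_of_mem htA]
      · simp [Set.indicator_of_notMem htA]
    have e2 : (∫ t in Ioc (0:ℝ) T, P.pullDual t (f t) (hgA.toLp _ t))
        = ∫ t in A, P.pullDual t (f t) v ∂(volume.restrict (Ioc (0:ℝ) T)) := by
      rw [← integral_indicator hA]
      refine integral_congr_ae ?_
      filter_upwards [hcoe] with t ht
      rw [ht]
      by_cases htA : t ∈ A
      · simp [Set.indicator_of_mem htA]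
      · simp [Set.indicator_of_notMem htA]
    have e3 := P.gstar_spec hf (hgA.toLp _)
    rw [e1, e2] at e3
    rw [integral_sub (hint1.mono_measure Measure.restrict_le_self)
      (hint2.mono_measure Measure.restrict_le_self), e3, sub_self]
  obtain ⟨D, hDc, hDd⟩ := TopologicalSpace.exists_countable_dense (X 0)
  have hae : ∀ᵐ t ∂(volume.restrict (Ioc (0:ℝ) T)), ∀ v ∈ D,
      (inner ℝ (P.φ t (P.gstar hf t)) (P.φ t v) : ℝ) = P.pullDual t (f t) v := by
    rw [ae_ball_iff hDc]
    intro v _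
    filter_upwards [hψ v] with t ht
    have h0 : (inner ℝ (P.φ t (P.gstar hf t)) (P.φ t v) : ℝ)
        - P.pullDual t (f t) v = 0 := ht
    linarith
  filter_upwards [hae] with t ht
  have heq : ∀ v : X 0,
      (inner ℝ (P.φ t (P.gstar hf t)) (P.φ t v) : ℝ) = P.pullDual t (f t) v := by
    have c1 : Continuous fun v : X 0 => (inner ℝ (P.φ t (P.gstar hf t)) (P.φ t v) : ℝ) :=
      continuous_const.inner (P.φ t).continuous
    have c2 : Continuous fun v : X 0 => P.pullDual t (f t) v :=
      (P.pullDual t (f t)).continuous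
    have h0 := Continuous.ext_on hDd c1 c2 (fun v hv => ht v hv)
    exact fun v => congrFun h0 v
  ext x
  have e1 : f t x = P.pullDual t (f t) ((P.φ t).symm x) := by
    simp [CompatiblePair.pullDual]
  rw [e1, ← heq ((P.φ t).symm x)]
  simp [InnerProductSpace.toDual_apply_apply]

lemma part6 {f : ∀ t, StrongDual ℝ (X t)} (hf : P.MemL2Xstar f) :
    IsLUB {r : ℝ | ∃ u : ∀ t, X t, P.MemL2X u ∧
        Real.sqrt (∫ t in Ioc (0:ℝ) T, ‖u t‖ ^ 2) ≤ 1 ∧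
        r = ∫ t in Ioc (0:ℝ) T, f t (u t)}
      (Real.sqrt (∫ t in Ioc (0:ℝ) T, ‖f t‖ ^ 2)) := by
  have hfae := P.gstar_repr hf
  have hNcongr : (∫ t in Ioc (0:ℝ) T, ‖f t‖ ^ 2)
      = ∫ t in Ioc (0:ℝ) T, ‖P.φ t (P.gstar hf t)‖ ^ 2 := by
    refine integral_congr_ae ?_
    filter_upwards [hfae] with t ht
    rw [ht]
    simp
  set N := Real.sqrt (∫ t in Ioc (0:ℝ) T, ‖P.φ t (P.gstar hf t)‖ ^ 2) with hNdef
  have hNtarget : Real.sqrt (∫ t in Ioc (0:ℝ) T, ‖f t‖ ^ 2) = N := by rw [hNcongr]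
  have hN0 : 0 ≤ N := Real.sqrt_nonneg _
  have hNsq : (∫ t in Ioc (0:ℝ) T, ‖P.φ t (P.gstar hf t)‖ ^ 2) = N ^ 2 := by
    rw [hNdef, Real.sq_sqrt]
    exact integral_nonneg fun t => sq_nonneg _
  rw [hNtarget]
  have hub : ∀ r ∈ {r : ℝ | ∃ u : ∀ t, X t, P.MemL2X u ∧
      Real.sqrt (∫ t in Ioc (0:ℝ) T, ‖u t‖ ^ 2) ≤ 1 ∧
      r = ∫ t in Ioc (0:ℝ) T, f t (u t)}, r ≤ N := by
    rintro r ⟨u, hu, hle, rfl⟩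
    have hgu : MemLp (fun t => (P.φ t).symm (u t)) 2 (volume.restrict (Ioc (0:ℝ) T)) := hu
    have h4 : (fun t => ‖u t‖ ^ 2) = fun t => ‖P.φ t ((P.φ t).symm (u t))‖ ^ 2 := by
      funext t
      simp
    have e0 : (∫ t in Ioc (0:ℝ) T, f t (u t))
        = ∫ t in Ioc (0:ℝ) T,
            (inner ℝ (P.φ t (P.gstar hf t)) (P.φ t ((P.φ t).symm (u t))) : ℝ) := by
      refine integral_congr_ae ?_
      filter_upwards [hfae] with t ht
      rw [ht]
      simp [InnerProductSpace.toDual_apply_apply]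
    rw [e0]
    have e1 : (∫ t in Ioc (0:ℝ) T,
          (inner ℝ (P.φ t (P.gstar hf t)) (P.φ t ((P.φ t).symm (u t))) : ℝ))
        ≤ ∫ t in Ioc (0:ℝ) T,
            ‖P.φ t (P.gstar hf t)‖ * ‖P.φ t ((P.φ t).symm (u t))‖ := by
      refine integral_mono_ae (P.integrable_inner_comp (Lp.memLp (P.gstar hf)) hgu)
        (integrable_mul_of_memLp2 (P.memLp_norm_comp (Lp.memLp (P.gstar hf)))
          (P.memLp_norm_comp hgu)) ?_
      exact Eventually.of_forall fun t => real_inner_le_norm _ _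
    refine e1.trans ((integral_mul_le_sqrt (P.memLp_norm_comp (Lp.memLp (P.gstar hf)))
      (P.memLp_norm_comp hgu)).trans ?_)
    rw [← hNdef]
    calc N * Real.sqrt (∫ t in Ioc (0:ℝ) T, ‖P.φ t ((P.φ t).symm (u t))‖ ^ 2)
        ≤ N * 1 := by
          refine mul_le_mul_of_nonneg_left ?_ hN0
          rw [← h4]
          exact hle
      _ = N := mul_one N
  refine IsGreatest.isLUB ⟨?_, hub⟩
  haveI hfin : IsFiniteMeasure (volume.restrict (Ioc (0:ℝ) T)) := finite
  rcases eq_or_lt_of_le hN0 with hNzero | hNpos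
  · refine ⟨fun t => 0, ?_, ?_, ?_⟩
    · show MemLp (fun t => (P.φ t).symm 0) 2 _
      simpa using (memLp_const (0 : X 0))
    · simp
    · rw [← hNzero]
      symm
      simp
  · refine ⟨fun t => P.φ t (N⁻¹ • (P.gstar hf : ℝ → X 0) t), ?_, ?_, ?_⟩
    · show MemLp (fun t => (P.φ t).symm
        (P.φ t (N⁻¹ • (P.gstar hf : ℝ → X 0) t))) 2 _
      simpa only [ContinuousLinearEquiv.symm_apply_apply, Pi.smul_def]
        using (Lp.memLp (P.gstar hf)).const_smul N⁻¹
    · have he : (fun t => ‖P.φ t (N⁻¹ • (P.gstar hf : ℝ → X 0) t)‖ ^ 2)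
          = fun t => (N⁻¹) ^ 2 * ‖P.φ t (P.gstar hf t)‖ ^ 2 := by
        funext t
        rw [_root_.map_smul, norm_smul, Real.norm_eq_abs, abs_of_nonneg (inv_nonneg.2 hN0)]
        ring
      rw [he, integral_const_mul, hNsq, inv_pow, inv_mul_cancel₀ (by positivity)]
      simp
    · have he : (∫ t in Ioc (0:ℝ) T, f t (P.φ t (N⁻¹ • (P.gstar hf : ℝ → X 0) t)))
          = ∫ t in Ioc (0:ℝ) T, N⁻¹ * ‖P.φ t (P.gstar hf t)‖ ^ 2 := by
        refine integral_congr_ae ?_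
        filter_upwards [hfae] with t ht
        rw [ht]
        simp only [InnerProductSpace.toDual_apply_apply, _root_.map_smul]
        rw [smul_eq_mul, real_inner_self_eq_norm_sq]
      rw [he, integral_const_mul, hNsq, pow_two, ← mul_assoc,
        inv_mul_cancel₀ (by positivity), one_mul]

end Part6

end CompatiblePair

theorem stmt7 (T : ℝ) (hT : 0 < T) (X : ℝ → Type*) [∀ t, NormedAddCommGroup (X t)]
    [∀ t, InnerProductSpace ℝ (X t)] [∀ t, CompleteSpace (X t)]
    [∀ t, TopologicalSpace.SeparableSpace (X t)] (P : CompatiblePair T X) :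
    -- `J f` is a well-defined functional on `L²_X`: the pairing is integrable
    (∀ (f : ∀ t, StrongDual ℝ (X t)) (u : ∀ t, X t),
      P.MemL2Xstar f → P.MemL2X u → IntegrableOn (fun t => f t (u t)) (Ioc 0 T)) ∧
    -- `J` is linear
    (∀ f g : ∀ t, StrongDual ℝ (X t), P.MemL2Xstar f → P.MemL2Xstar g →
      ∀ u : ∀ t, X t, P.MemL2X u →
        (∫ t in Ioc (0:ℝ) T, (f t + g t) (u t))
          = (∫ t in Ioc (0:ℝ) T, f t (u t)) + ∫ t in Ioc (0:ℝ) T, g t (u t)) ∧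
    (∀ (c : ℝ) (f : ∀ t, StrongDual ℝ (X t)), P.MemL2Xstar f →
      ∀ u : ∀ t, X t, P.MemL2X u →
        (∫ t in Ioc (0:ℝ) T, (c • f t) (u t)) = c * ∫ t in Ioc (0:ℝ) T, f t (u t)) ∧
    -- `J` is injective (up to a.e. equivalence in `L²_{X*}`)
    (∀ f : ∀ t, StrongDual ℝ (X t), P.MemL2Xstar f →
      (∀ u : ∀ t, X t, P.MemL2X u → (∫ t in Ioc (0:ℝ) T, f t (u t)) = 0) →
      ∀ᵐ t ∂(volume.restrict (Ioc (0:ℝ) T)), f t = 0) ∧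
    -- `J` is surjective: every bounded linear functional on `L²_X` is represented
    (∀ F : (∀ t, X t) → ℝ,
      (∀ u v : ∀ t, X t, P.MemL2X u → P.MemL2X v → F (u + v) = F u + F v) →
      (∀ (c : ℝ) (u : ∀ t, X t), P.MemL2X u → F (c • u) = c * F u) →
      (∃ M : ℝ, ∀ u : ∀ t, X t, P.MemL2X u →
        |F u| ≤ M * Real.sqrt (∫ t in Ioc (0:ℝ) T, ‖u t‖ ^ 2)) →
      ∃ f : ∀ t, StrongDual ℝ (X t), P.MemL2Xstar f ∧
        ∀ u : ∀ t, X t, P.MemL2X u → F u = ∫ t in Ioc (0:ℝ) T, f t (u t)) ∧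
    -- `J` is an isometry: the operator norm of `J f` over the unit ball of `L²_X`
    -- equals the `L²_{X*}` norm of `f`
    (∀ f : ∀ t, StrongDual ℝ (X t), P.MemL2Xstar f →
      IsLUB {r : ℝ | ∃ u : ∀ t, X t, P.MemL2X u ∧
          Real.sqrt (∫ t in Ioc (0:ℝ) T, ‖u t‖ ^ 2) ≤ 1 ∧
          r = ∫ t in Ioc (0:ℝ) T, f t (u t)}
        (Real.sqrt (∫ t in Ioc (0:ℝ) T, ‖f t‖ ^ 2))) := by

  refine ⟨fun f u hf hu => P.part1 hf hu,
    fun f g hf hg u hu => P.part2 hf hg hu,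
    fun c f _ u _ => CompatiblePair.part3 c,
    fun f hf hz => P.part4 hf hz,
    fun F hadd hsmul hbdd => P.part5 F hadd hsmul hbdd,
    fun f hf => P.part6 hf⟩
end
end

section
/- Under the stated assumptions, for all u, v ∈ L²_H the map t ↦ λ(t; u(t), v(t)) is measurable on [0,T], and there is a constant C independent of t such that |λ(t; u, v)| ≤ C‖u‖_{H(t)}‖v‖_{H(t)} for all u, v ∈ H(t) and all t ∈ [0,T]. -/
open MeasureTheory Set Filter Topology

noncomputable section

variable {T : ℝ} {X : ℝ → Type*} [∀ t, NormedAddCommGroup (X t)]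
  [∀ t, InnerProductSpace ℝ (X t)]

/-- The `L²(0,T)`-type norm of a (possibly `t`-dependent) family of vectors. -/
def l2n (T : ℝ) {Y : ℝ → Type*} [∀ t, NormedAddCommGroup (Y t)] (u : ∀ t, Y t) : ℝ :=
  Real.sqrt (∫ t in Ioc (0:ℝ) T, ‖u t‖ ^ 2)

/-- The `W`-type norm built from a function and its (weak material) derivative. -/
def wn (T : ℝ) {Y Z : ℝ → Type*} [∀ t, NormedAddCommGroup (Y t)]
    [∀ t, NormedAddCommGroup (Z t)] (u : ∀ t, Y t) (g : ∀ t, Z t) : ℝ :=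
  Real.sqrt ((∫ t in Ioc (0:ℝ) T, ‖u t‖ ^ 2) + ∫ t in Ioc (0:ℝ) T, ‖g t‖ ^ 2)

/-- The evolving Gelfand-triple setting: compatible pairs `(V, φ|_{V₀})` and `(H, φ)`,
with `V(t) ⊂ H(t)` continuously and densely (via `ι t`), together with the
differentiability assumptions on `t ↦ ‖φ_t u₀‖²_{H(t)}` (Assumptions 2.21/2.31 of the paper). -/
structure EvolvingGelfand (T : ℝ) (V H : ℝ → Type*)
    [∀ t, NormedAddCommGroup (V t)] [∀ t, InnerProductSpace ℝ (V t)]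
    [∀ t, NormedAddCommGroup (H t)] [∀ t, InnerProductSpace ℝ (H t)] where
  PV : CompatiblePair T V
  PH : CompatiblePair T H
  ι : ∀ t, V t →L[ℝ] H t
  ι_inj : ∀ t, Function.Injective (ι t)
  ι_dense : ∀ t, DenseRange (ι t)
  ι_compat : ∀ (t : ℝ) (v : V 0), ι t (PV.φ t v) = PH.φ t (ι 0 v)
  θ : ℝ → H 0 → ℝ
  θ_hasDeriv : ∀ u₀ : H 0, ∀ t ∈ Icc (0:ℝ) T,
    HasDerivWithinAt (fun s => ‖PH.φ s u₀‖ ^ 2) (θ t u₀) (Icc (0:ℝ) T) t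
  θ_cont : ∀ t ∈ Icc (0:ℝ) T, Continuous (θ t)
  Cθ : ℝ
  θ_bound : ∀ t ∈ Icc (0:ℝ) T, ∀ u₀ v₀ : H 0,
    |θ t (u₀ + v₀) - θ t (u₀ - v₀)| ≤ Cθ * ‖u₀‖ * ‖v₀‖

namespace EvolvingGelfand

variable {T : ℝ} {V H : ℝ → Type*}
  [∀ t, NormedAddCommGroup (V t)] [∀ t, InnerProductSpace ℝ (V t)]
  [∀ t, NormedAddCommGroup (H t)] [∀ t, InnerProductSpace ℝ (H t)]

/-- The bilinear form `λ̂(t;·,·)` on `H₀`. -/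
def lamHat (E : EvolvingGelfand T V H) (t : ℝ) (u₀ v₀ : H 0) : ℝ :=
  (E.θ t (u₀ + v₀) - E.θ t (u₀ - v₀)) / 4

/-- The bilinear form `λ(t;·,·)` on `H(t)`. -/
def lam (E : EvolvingGelfand T V H) (t : ℝ) (u v : H t) : ℝ :=
  E.lamHat t ((E.PH.φ t).symm u) ((E.PH.φ t).symm v)

/-- The embedding `H(t) ⊂ V(t)*` of the Gelfand triple: `h ↦ (h, ι t ·)_{H(t)}`. -/
def embed (E : EvolvingGelfand T V H) (t : ℝ) (h : H t) : StrongDual ℝ (V t) :=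
  (innerSL ℝ h).comp (E.ι t)

/-- `g ∈ L²_{V*}` is the weak material derivative of `u ∈ L²_V`. Test functions
`η ∈ D_V(0,T)` are parametrised by their pullbacks `η₀ ∈ C_c^∞((0,T);V₀)`,
so that `η(t) = φ_t η₀(t)` and `∂•η(t) = φ_t η₀'(t)`. -/
def IWMD (E : EvolvingGelfand T V H) (u : ∀ t, V t)
    (g : ∀ t, StrongDual ℝ (V t)) : Prop :=
  ∀ η₀ : ℝ → V 0, ContDiff ℝ (⊤ : ℕ∞) η₀ → tsupport η₀ ⊆ Ioo (0:ℝ) T →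
    (∫ t in Ioc (0:ℝ) T, g t (E.PV.φ t (η₀ t)))
      = -(∫ t in Ioc (0:ℝ) T,
            (inner ℝ (E.ι t (u t)) (E.ι t (E.PV.φ t (deriv η₀ t))) : ℝ))
        - ∫ t in Ioc (0:ℝ) T, E.lam t (E.ι t (u t)) (E.ι t (E.PV.φ t (η₀ t)))

/-- `v' ∈ L²(0,T;V₀*)` is the weak derivative of `v ∈ L²(0,T;V₀)` in the
Gelfand triple `V₀ ⊂ H₀ ⊂ V₀*`. -/
def HWD0 (E : EvolvingGelfand T V H) (v : ℝ → V 0)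
    (v' : ℝ → StrongDual ℝ (V 0)) : Prop :=
  ∀ ζ : ℝ → ℝ, ContDiff ℝ (⊤ : ℕ∞) ζ → tsupport ζ ⊆ Ioo (0:ℝ) T → ∀ w : V 0,
    (∫ t in Ioc (0:ℝ) T, deriv ζ t * (inner ℝ (E.ι 0 (v t)) (E.ι 0 w) : ℝ))
      = -∫ t in Ioc (0:ℝ) T, ζ t * v' t w

/-- The evolving space equivalence between `W(V,V*)` and `𝒲(V₀,V₀*)`,
including the two-sided norm equivalence. -/
def ESE (E : EvolvingGelfand T V H) : Prop :=
  (∀ u : ∀ t, V t, E.PV.MemL2X u →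
    ((∃ g, E.PV.MemL2Xstar g ∧ E.IWMD u g) ↔
      (∃ v', MemLp v' 2 (volume.restrict (Ioc (0:ℝ) T)) ∧
        E.HWD0 (fun t => (E.PV.φ t).symm (u t)) v'))) ∧
  ∃ C₁ C₂ : ℝ, 0 < C₁ ∧ 0 < C₂ ∧
    ∀ (u : ∀ t, V t) (g : ∀ t, StrongDual ℝ (V t))
      (v' : ℝ → StrongDual ℝ (V 0)),
      E.PV.MemL2X u → E.PV.MemL2Xstar g → E.IWMD u g →
      MemLp v' 2 (volume.restrict (Ioc (0:ℝ) T)) →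
      E.HWD0 (fun t => (E.PV.φ t).symm (u t)) v' →
        C₁ * wn T (fun t => (E.PV.φ t).symm (u t)) v' ≤ wn T u g ∧
        wn T u g ≤ C₂ * wn T (fun t => (E.PV.φ t).symm (u t)) v'

end EvolvingGelfand

section Aux

open EvolvingGelfand

variable {T : ℝ} {V H : ℝ → Type*}
  [∀ t, NormedAddCommGroup (V t)] [∀ t, InnerProductSpace ℝ (V t)]
  [∀ t, NormedAddCommGroup (H t)] [∀ t, InnerProductSpace ℝ (H t)]

/-- For each fixed `x : H 0`, the map `t ↦ θ t x` (cut off outside `Ioc 0 T`)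
is globally measurable, being an everywhere pointwise limit of difference quotients. -/
lemma theta_pw_measurable (hT : 0 < T) (E : EvolvingGelfand T V H) (x : H 0) :
    Measurable ((Ioc (0:ℝ) T).indicator (fun t => E.θ t x)) := by
  classical
  set g : ℝ → ℝ := fun s => ‖E.PH.φ s x‖ ^ 2 with hg
  have hgc : ContinuousOn g (Icc (0:ℝ) T) := (E.PH.continuous_norm x).pow 2
  set c : ℕ → ℝ := fun n => 1 - 1 / (n + 2) with hc
  have hc_pos : ∀ n, 0 < c n := by
    intro n
    have h2 : (0:ℝ) < n + 2 := by positivity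
    have : 1 / ((n:ℝ) + 2) < 1 := by
      rw [div_lt_one h2]; linarith
    simp only [hc]; linarith
  have hc_lt : ∀ n, c n < 1 := by
    intro n
    have h2 : (0:ℝ) < n + 2 := by positivity
    have : 0 < 1 / ((n:ℝ) + 2) := by positivity
    simp only [hc]; linarith
  have hc_tendsto : Filter.Tendsto c atTop (𝓝 1) := by
    have h0 : Filter.Tendsto (fun n : ℕ => 1 / ((n:ℝ) + 2)) atTop (𝓝 0) := by
      simp only [one_div]
      exact tendsto_inv_atTop_zero.comp
        (Filter.tendsto_atTop_add_const_right _ 2 tendsto_natCast_atTop_atTop)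
    have := Filter.Tendsto.const_sub (1:ℝ) h0
    simpa [hc, one_div] using this
  -- the difference quotients
  set q : ℕ → ℝ → ℝ := fun n t => (g (t * c n) - g t) / (t * c n - t) with hq
  -- each quotient, cut off, is measurable
  have hmaps : ∀ n, MapsTo (fun t => t * c n) (Ioc (0:ℝ) T) (Icc (0:ℝ) T) := by
    intro n t ht
    constructor
    · show 0 ≤ t * c n
      nlinarith [hc_pos n, ht.1]
    · show t * c n ≤ T
      nlinarith [hc_lt n, ht.1, ht.2]
  have hqc : ∀ n, ContinuousOn (q n) (Ioc (0:ℝ) T) := by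
    intro n
    have h1 : ContinuousOn (fun t => g (t * c n)) (Ioc (0:ℝ) T) :=
      hgc.comp ((continuous_id.mul continuous_const).continuousOn) (hmaps n)
    have h2 : ContinuousOn g (Ioc (0:ℝ) T) := hgc.mono Ioc_subset_Icc_self
    refine (h1.sub h2).div ((continuous_id.mul continuous_const).continuousOn.sub
      continuous_id.continuousOn) ?_
    intro t ht
    have : t * c n - t = t * (c n - 1) := by ring
    rw [this]
    have := hc_lt n
    have := ht.1
    intro hcontra
    rcases mul_eq_zero.1 hcontra with h | h
    · linarith
    · linarith
  have hQmeas : ∀ n, Measurable ((Ioc (0:ℝ) T).indicator (q n)) := by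
    intro n
    rw [← Set.piecewise_eq_indicator]
    exact (hqc n).measurable_piecewise continuousOn_const measurableSet_Ioc
  -- pointwise convergence everywhere
  have hlim : ∀ t, Filter.Tendsto (fun n => (Ioc (0:ℝ) T).indicator (q n) t) atTop
      (𝓝 ((Ioc (0:ℝ) T).indicator (fun t => E.θ t x) t)) := by
    intro t
    by_cases ht : t ∈ Ioc (0:ℝ) T
    · simp only [Set.indicator_of_mem ht]
      have hderiv := E.θ_hasDeriv x t ⟨le_of_lt ht.1, ht.2⟩
      have hslope := hasDerivWithinAt_iff_tendsto_slope.1 hderiv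
      have hs_mem : ∀ n, t * c n ∈ Icc (0:ℝ) T \ {t} := by
        intro n
        refine ⟨hmaps n ht, ?_⟩
        simp only [Set.mem_singleton_iff]
        intro hcontra
        have h1 := hc_lt n
        have h2 := ht.1
        nlinarith
      have hs_tendsto : Filter.Tendsto (fun n => t * c n) atTop (𝓝[Icc (0:ℝ) T \ {t}] t) := by
        rw [tendsto_nhdsWithin_iff]
        constructor
        · have h := hc_tendsto.const_mul t
          rw [mul_one] at h
          exact h
        · exact Filter.Eventually.of_forall hs_mem
      have := hslope.comp hs_tendsto
      refine this.congr (fun n => ?_)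
      simp only [Function.comp, slope_def_field, hq, hg]
    · simp only [Set.indicator_of_notMem ht]
      exact tendsto_const_nhds
  exact measurable_of_tendsto_metrizable hQmeas (tendsto_pi_nhds.2 hlim)

/-- Composition: `t ↦ θ t (w t)` is a.e. measurable for a.e. strongly measurable `w`. -/
lemma theta_comp_aemeasurable (hT : 0 < T) (E : EvolvingGelfand T V H)
    [TopologicalSpace.SeparableSpace (H 0)]
    {w : ℝ → H 0} (hw : AEStronglyMeasurable w (volume.restrict (Ioc (0:ℝ) T))) :
    AEMeasurable (fun t => E.θ t (w t)) (volume.restrict (Ioc (0:ℝ) T)) := by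
  borelize (H 0)
  haveI : SecondCountableTopology (H 0) := UniformSpace.secondCountable_of_separable (H 0)
  set F : H 0 → ℝ → ℝ := fun x => (Ioc (0:ℝ) T).indicator (fun t => E.θ t x) with hF
  have hcont : ∀ t : ℝ, Continuous fun x => F x t := by
    intro t
    by_cases ht : t ∈ Ioc (0:ℝ) T
    · have : (fun x => F x t) = fun x => E.θ t x := by
        funext x; simp [hF, Set.indicator_of_mem ht]
      rw [this]
      exact E.θ_cont t ⟨le_of_lt ht.1, ht.2⟩
    · have : (fun x => F x t) = fun _ => (0:ℝ) := by
        funext x; simp [hF, Set.indicator_of_notMem ht]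
      rw [this]; exact continuous_const
  have hmeas : ∀ x, StronglyMeasurable (F x) := fun x =>
    (theta_pw_measurable hT E x).stronglyMeasurable
  have hSM : StronglyMeasurable (Function.uncurry F) :=
    stronglyMeasurable_uncurry_of_continuous_of_stronglyMeasurable hcont hmeas
  have hpair : AEMeasurable (fun t => (w t, t)) (volume.restrict (Ioc (0:ℝ) T)) :=
    hw.aemeasurable.prodMk aemeasurable_id
  have hcomp : AEMeasurable (fun t => F (w t) t) (volume.restrict (Ioc (0:ℝ) T)) :=
    hSM.measurable.comp_aemeasurable hpair
  refine hcomp.congr ?_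
  filter_upwards [ae_restrict_mem measurableSet_Ioc] with t ht
  simp [hF, Set.indicator_of_mem ht]

end Aux

theorem stmt8 (T : ℝ) (hT : 0 < T) (V H : ℝ → Type*)
    [∀ t, NormedAddCommGroup (V t)] [∀ t, InnerProductSpace ℝ (V t)]
    [∀ t, NormedAddCommGroup (H t)] [∀ t, InnerProductSpace ℝ (H t)]
    [∀ t, CompleteSpace (V t)] [∀ t, TopologicalSpace.SeparableSpace (V t)]
    [∀ t, CompleteSpace (H t)] [∀ t, TopologicalSpace.SeparableSpace (H t)]
    (E : EvolvingGelfand T V H) :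
    -- for `u, v ∈ L²_H` the map `t ↦ λ(t; u(t), v(t))` is measurable
    (∀ u v : ∀ t, H t, E.PH.MemL2X u → E.PH.MemL2X v →
      AEMeasurable (fun t => E.lam t (u t) (v t)) (volume.restrict (Ioc (0:ℝ) T))) ∧
    -- `λ(t;·,·)` is bounded independently of `t`
    (∃ C : ℝ, 0 ≤ C ∧ ∀ t ∈ Icc (0:ℝ) T, ∀ u v : H t,
      |E.lam t u v| ≤ C * ‖u‖ * ‖v‖) := by
  constructor
  · intro u v hu hv
    have ha : AEStronglyMeasurable (fun t => (E.PH.φ t).symm (u t))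
        (volume.restrict (Ioc (0:ℝ) T)) := hu.1
    have hb : AEStronglyMeasurable (fun t => (E.PH.φ t).symm (v t))
        (volume.restrict (Ioc (0:ℝ) T)) := hv.1
    have h1 : AEMeasurable (fun t => E.θ t ((E.PH.φ t).symm (u t) + (E.PH.φ t).symm (v t)))
        (volume.restrict (Ioc (0:ℝ) T)) := theta_comp_aemeasurable hT E (ha.add hb)
    have h2 : AEMeasurable (fun t => E.θ t ((E.PH.φ t).symm (u t) - (E.PH.φ t).symm (v t)))
        (volume.restrict (Ioc (0:ℝ) T)) := theta_comp_aemeasurable hT E (ha.sub hb)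
    have : AEMeasurable (fun t =>
        (E.θ t ((E.PH.φ t).symm (u t) + (E.PH.φ t).symm (v t))
          - E.θ t ((E.PH.φ t).symm (u t) - (E.PH.φ t).symm (v t))) / 4)
        (volume.restrict (Ioc (0:ℝ) T)) := (h1.sub h2).div_const 4
    exact this.congr (Filter.Eventually.of_forall fun t => rfl)
  · refine ⟨|E.Cθ| * E.PH.C ^ 2 / 4, by positivity, ?_⟩
    intro t ht u v
    set a := (E.PH.φ t).symm u with hadef
    set b := (E.PH.φ t).symm v with hbdef
    have hbound := E.θ_bound t ht a b
    have hC := E.PH.C_pos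
    have h2 : ‖a‖ ≤ E.PH.C * ‖u‖ := E.PH.norm_symm_le t ht u
    have h3 : ‖b‖ ≤ E.PH.C * ‖v‖ := E.PH.norm_symm_le t ht v
    have han : (0:ℝ) ≤ ‖a‖ := norm_nonneg a
    have hbn : (0:ℝ) ≤ ‖b‖ := norm_nonneg b
    have hun : (0:ℝ) ≤ ‖u‖ := norm_nonneg u
    have hvn : (0:ℝ) ≤ ‖v‖ := norm_nonneg v
    have hCθ : E.Cθ ≤ |E.Cθ| := le_abs_self _
    have hCθ0 : (0:ℝ) ≤ |E.Cθ| := abs_nonneg _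
    have key : |E.θ t (a + b) - E.θ t (a - b)| ≤ |E.Cθ| * (E.PH.C * ‖u‖) * (E.PH.C * ‖v‖) := by
      have hab : ‖a‖ * ‖b‖ ≤ (E.PH.C * ‖u‖) * (E.PH.C * ‖v‖) :=
        mul_le_mul h2 h3 hbn (by positivity)
      calc |E.θ t (a + b) - E.θ t (a - b)| ≤ E.Cθ * ‖a‖ * ‖b‖ := hbound
        _ ≤ |E.Cθ| * ‖a‖ * ‖b‖ :=
          mul_le_mul_of_nonneg_right (mul_le_mul_of_nonneg_right hCθ han) hbn
        _ = |E.Cθ| * (‖a‖ * ‖b‖) := by ring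
        _ ≤ |E.Cθ| * ((E.PH.C * ‖u‖) * (E.PH.C * ‖v‖)) := mul_le_mul_of_nonneg_left hab hCθ0
        _ = |E.Cθ| * (E.PH.C * ‖u‖) * (E.PH.C * ‖v‖) := by ring
    have : |E.lam t u v| = |E.θ t (a + b) - E.θ t (a - b)| / 4 := by
      rw [EvolvingGelfand.lam, EvolvingGelfand.lamHat, abs_div]
      norm_num
      rfl
    rw [this]
    rw [div_le_iff₀ (by norm_num : (0:ℝ) < 4)] at *
    calc |E.θ t (a + b) - E.θ t (a - b)|
        ≤ |E.Cθ| * (E.PH.C * ‖u‖) * (E.PH.C * ‖v‖) := key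
      _ = |E.Cθ| * E.PH.C ^ 2 / 4 * ‖u‖ * ‖v‖ * 4 := by ring
end
end

section
/- Under the stated assumptions, define b̂(t;u₀,v₀) := (φ_t u₀, φ_t v₀)_{H(t)} for u₀, v₀ ∈ H₀. Then for all σ₁, σ₂ ∈ C¹([0,T];H₀), the map t ↦ b̂(t;σ₁(t),σ₂(t)) is classically differentiable on [0,T] and (d/dt) b̂(t;σ₁(t),σ₂(t)) = b̂(t;σ₁′(t),σ₂(t)) + b̂(t;σ₁(t),σ₂′(t)) + λ̂(t;σ₁(t),σ₂(t)). -/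
open MeasureTheory Set Filter Topology

noncomputable section

variable {T : ℝ} {X : ℝ → Type*} [∀ t, NormedAddCommGroup (X t)]
  [∀ t, InnerProductSpace ℝ (X t)]

/-- The inner product on the dual of a real Hilbert space, via the Riesz isometry. -/

private lemma polar_inner {E : Type*} [NormedAddCommGroup E] [InnerProductSpace ℝ E] (x y : E) :
    (inner ℝ x y : ℝ) = (‖x + y‖ ^ 2 - ‖x - y‖ ^ 2) / 4 := by
  rw [norm_add_sq_real, norm_sub_sq_real]; ring

private lemma inner_sub_add {E : Type*} [NormedAddCommGroup E] [InnerProductSpace ℝ E] (a b : E) :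
    (inner ℝ (a - b) (a + b) : ℝ) = ‖a‖ ^ 2 - ‖b‖ ^ 2 := by
  simp [inner_sub_left, inner_add_right, real_inner_self_eq_norm_sq, real_inner_comm a b]

private lemma bcont {T : ℝ} {X : ℝ → Type*} [∀ t, NormedAddCommGroup (X t)]
    [∀ t, InnerProductSpace ℝ (X t)] (P : CompatiblePair T X) (u v : X 0) :
    ContinuousOn (fun s => (inner ℝ (P.φ s u) (P.φ s v) : ℝ)) (Icc (0:ℝ) T) := by
  have h : ∀ s, (inner ℝ (P.φ s u) (P.φ s v) : ℝ)
      = (‖P.φ s (u + v)‖ ^ 2 - ‖P.φ s (u - v)‖ ^ 2) / 4 := by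
    intro s
    rw [polar_inner, map_add, map_sub]
  simp only [h]
  exact (((P.continuous_norm (u + v)).pow 2).sub ((P.continuous_norm (u - v)).pow 2)).div_const 4

/-- Key lemma: differentiating `s ↦ ‖φ_s σ(s)‖²` along a `C¹` curve `σ`. -/
private lemma norm_sq_deriv {T : ℝ} {X : ℝ → Type*} [∀ t, NormedAddCommGroup (X t)]
    [∀ t, InnerProductSpace ℝ (X t)] (P : CompatiblePair T X) (θ : ℝ → X 0 → ℝ)
    (hθ_deriv : ∀ u₀ : X 0, ∀ t ∈ Icc (0:ℝ) T,
      HasDerivWithinAt (fun s => ‖P.φ s u₀‖ ^ 2) (θ t u₀) (Icc (0:ℝ) T) t)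
    (σ σ' : ℝ → X 0)
    (hσ : ∀ t ∈ Icc (0:ℝ) T, HasDerivWithinAt σ (σ' t) (Icc (0:ℝ) T) t)
    (t : ℝ) (ht : t ∈ Icc (0:ℝ) T) :
    HasDerivWithinAt (fun s => ‖P.φ s (σ s)‖ ^ 2)
      (θ t (σ t) + 2 * (inner ℝ (P.φ t (σ' t)) (P.φ t (σ t)) : ℝ)) (Icc (0:ℝ) T) t := by
  set g : ℝ → ℝ := fun s => (inner ℝ (P.φ s (σ s - σ t)) (P.φ s (σ s + σ t)) : ℝ) with hg
  have hfg : ∀ s, ‖P.φ s (σ s)‖ ^ 2 = ‖P.φ s (σ t)‖ ^ 2 + g s := by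
    intro s
    simp only [hg, map_sub, map_add, inner_sub_add]
    ring
  have hgt : g t = 0 := by simp [hg]
  -- the filter
  set l : Filter ℝ := 𝓝[Icc (0:ℝ) T \ {t}] t with hl
  have hll : l ≤ 𝓝[Icc (0:ℝ) T] t := nhdsWithin_mono t diff_subset
  have hmem : ∀ᶠ s in l, s ∈ Icc (0:ℝ) T := by
    filter_upwards [self_mem_nhdsWithin] with s hs using hs.1
  -- slope of σ tends to σ' t
  have tA : Tendsto (slope σ t) l (𝓝 (σ' t)) :=
    hasDerivWithinAt_iff_tendsto_slope.mp (hσ t ht)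
  have tσ : Tendsto σ l (𝓝 (σ t)) := ((hσ t ht).continuousWithinAt).mono_left hll
  -- decomposition of the slope of g
  have hslope : ∀ s : ℝ, slope g t s
      = (inner ℝ (P.φ s (slope σ t s - σ' t)) (P.φ s (σ s + σ t)) : ℝ)
        + (inner ℝ (P.φ s (σ' t)) (P.φ s (σ s - σ t)) : ℝ)
        + (inner ℝ (P.φ s (σ' t)) (P.φ s ((2:ℝ) • σ t)) : ℝ) := by
    intro s
    have h1 : slope g t s = (s - t)⁻¹ * g s := by
      simp [slope_def_field, hgt, div_eq_inv_mul]
    have h2 : slope σ t s = (s - t)⁻¹ • (σ s - σ t) := by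
      simp [slope, vsub_eq_sub]
    rw [h1, h2, hg]
    simp only [map_sub, map_add, _root_.map_smul, two_smul, inner_sub_left, inner_add_left,
      inner_add_right, inner_sub_right, real_inner_smul_left, real_inner_smul_right,
      smul_sub, smul_add]
    ring
  -- term 1 tends to 0
  have t1 : Tendsto (fun s => (inner ℝ (P.φ s (slope σ t s - σ' t)) (P.φ s (σ s + σ t)) : ℝ)) l
      (𝓝 0) := by
    apply squeeze_zero_norm' (a := fun s => (P.C * ‖slope σ t s - σ' t‖) * (P.C * ‖σ s + σ t‖))
    · filter_upwards [hmem] with s hs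
      calc ‖(inner ℝ (P.φ s (slope σ t s - σ' t)) (P.φ s (σ s + σ t)) : ℝ)‖
          ≤ ‖P.φ s (slope σ t s - σ' t)‖ * ‖P.φ s (σ s + σ t)‖ := norm_inner_le_norm _ _
        _ ≤ (P.C * ‖slope σ t s - σ' t‖) * (P.C * ‖σ s + σ t‖) :=
            mul_le_mul (P.norm_map_le s hs _) (P.norm_map_le s hs _) (norm_nonneg _)
              (mul_nonneg P.C_pos.le (norm_nonneg _))
    · have h0 : Tendsto (fun s => ‖slope σ t s - σ' t‖) l (𝓝 0) := by
        have h0' : Tendsto (fun s => slope σ t s - σ' t) l (𝓝 0) := by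
          simpa using tA.sub (tendsto_const_nhds (x := σ' t))
        simpa using h0'.norm
      have h1 : Tendsto (fun s => ‖σ s + σ t‖) l (𝓝 ‖σ t + σ t‖) :=
        (tσ.add (tendsto_const_nhds (x := σ t))).norm
      have := ((tendsto_const_nhds (x := P.C)).mul h0).mul
        ((tendsto_const_nhds (x := P.C)).mul h1)
      simpa using this
  -- term 2 tends to 0
  have t2 : Tendsto (fun s => (inner ℝ (P.φ s (σ' t)) (P.φ s (σ s - σ t)) : ℝ)) l (𝓝 0) := by
    apply squeeze_zero_norm' (a := fun s => (P.C * ‖σ' t‖) * (P.C * ‖σ s - σ t‖))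
    · filter_upwards [hmem] with s hs
      calc ‖(inner ℝ (P.φ s (σ' t)) (P.φ s (σ s - σ t)) : ℝ)‖
          ≤ ‖P.φ s (σ' t)‖ * ‖P.φ s (σ s - σ t)‖ := norm_inner_le_norm _ _
        _ ≤ (P.C * ‖σ' t‖) * (P.C * ‖σ s - σ t‖) :=
            mul_le_mul (P.norm_map_le s hs _) (P.norm_map_le s hs _) (norm_nonneg _)
              (mul_nonneg P.C_pos.le (norm_nonneg _))
    · have h0 : Tendsto (fun s => ‖σ s - σ t‖) l (𝓝 0) := by
        have h0' : Tendsto (fun s => σ s - σ t) l (𝓝 0) := by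
          simpa using tσ.sub (tendsto_const_nhds (x := σ t))
        simpa using h0'.norm
      have := ((tendsto_const_nhds (x := P.C * ‖σ' t‖))).mul
        ((tendsto_const_nhds (x := P.C)).mul h0)
      simpa using this
  -- term 3 tends to the limit
  have t3 : Tendsto (fun s => (inner ℝ (P.φ s (σ' t)) (P.φ s ((2:ℝ) • σ t)) : ℝ)) l
      (𝓝 (2 * (inner ℝ (P.φ t (σ' t)) (P.φ t (σ t)) : ℝ))) := by
    have := (bcont P (σ' t) ((2:ℝ) • σ t) t ht).mono_left hll
    have heq : (inner ℝ (P.φ t (σ' t)) (P.φ t ((2:ℝ) • σ t)) : ℝ)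
        = 2 * (inner ℝ (P.φ t (σ' t)) (P.φ t (σ t)) : ℝ) := by
      rw [_root_.map_smul, real_inner_smul_right]
    rw [← heq]
    exact this
  have HG : HasDerivWithinAt g (2 * (inner ℝ (P.φ t (σ' t)) (P.φ t (σ t)) : ℝ))
      (Icc (0:ℝ) T) t := by
    rw [hasDerivWithinAt_iff_tendsto_slope]
    have := (t1.add t2).add t3
    rw [show (0:ℝ) + 0 + 2 * (inner ℝ (P.φ t (σ' t)) (P.φ t (σ t)) : ℝ)
        = 2 * (inner ℝ (P.φ t (σ' t)) (P.φ t (σ t)) : ℝ) by ring] at this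
    exact this.congr (fun s => (hslope s).symm)
  have := (hθ_deriv (σ t) t ht).add HG
  exact this.congr (fun s _ => hfg s) (hfg t)

theorem stmt9 (T : ℝ) (hT : 0 < T) (H : ℝ → Type*)
    [∀ t, NormedAddCommGroup (H t)] [∀ t, InnerProductSpace ℝ (H t)]
    [∀ t, CompleteSpace (H t)] [∀ t, TopologicalSpace.SeparableSpace (H t)]
    (P : CompatiblePair T H)
    -- Assumptions 2.21: `θ(t,u₀) = (d/dt)‖φ_t u₀‖²` exists classically, is continuous in
    -- `u₀`, and satisfies the polarisation bound uniformly in `t`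
    (θ : ℝ → H 0 → ℝ)
    (hθ_deriv : ∀ u₀ : H 0, ∀ t ∈ Icc (0:ℝ) T,
      HasDerivWithinAt (fun s => ‖P.φ s u₀‖ ^ 2) (θ t u₀) (Icc (0:ℝ) T) t)
    (hθ_cont : ∀ t ∈ Icc (0:ℝ) T, Continuous (θ t))
    (Cθ : ℝ)
    (hθ_bound : ∀ t ∈ Icc (0:ℝ) T, ∀ u₀ v₀ : H 0,
      |θ t (u₀ + v₀) - θ t (u₀ - v₀)| ≤ Cθ * ‖u₀‖ * ‖v₀‖)
    -- `σ₁, σ₂ ∈ C¹([0,T];H₀)` with derivatives `σ₁', σ₂'`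
    (σ₁ σ₂ σ₁' σ₂' : ℝ → H 0)
    (hσ₁ : ∀ t ∈ Icc (0:ℝ) T, HasDerivWithinAt σ₁ (σ₁' t) (Icc (0:ℝ) T) t)
    (hσ₁' : ContinuousOn σ₁' (Icc (0:ℝ) T))
    (hσ₂ : ∀ t ∈ Icc (0:ℝ) T, HasDerivWithinAt σ₂ (σ₂' t) (Icc (0:ℝ) T) t)
    (hσ₂' : ContinuousOn σ₂' (Icc (0:ℝ) T)) :
    -- `t ↦ b̂(t;σ₁(t),σ₂(t)) = (φ_t σ₁(t), φ_t σ₂(t))_{H(t)}` is classically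
    -- differentiable with the product-rule formula involving `λ̂`
    ∀ t ∈ Icc (0:ℝ) T,
      HasDerivWithinAt (fun s => (inner ℝ (P.φ s (σ₁ s)) (P.φ s (σ₂ s)) : ℝ))
        ((inner ℝ (P.φ t (σ₁' t)) (P.φ t (σ₂ t)) : ℝ)
          + (inner ℝ (P.φ t (σ₁ t)) (P.φ t (σ₂' t)) : ℝ)
          + (θ t (σ₁ t + σ₂ t) - θ t (σ₁ t - σ₂ t)) / 4)
        (Icc (0:ℝ) T) t := by
  intro t ht
  have hadd : ∀ s ∈ Icc (0:ℝ) T, HasDerivWithinAt (fun s => σ₁ s + σ₂ s)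
      (σ₁' s + σ₂' s) (Icc (0:ℝ) T) s := fun s hs => (hσ₁ s hs).add (hσ₂ s hs)
  have hsub : ∀ s ∈ Icc (0:ℝ) T, HasDerivWithinAt (fun s => σ₁ s - σ₂ s)
      (σ₁' s - σ₂' s) (Icc (0:ℝ) T) s := fun s hs => (hσ₁ s hs).sub (hσ₂ s hs)
  have h1 := norm_sq_deriv P θ hθ_deriv (fun s => σ₁ s + σ₂ s) (fun s => σ₁' s + σ₂' s)
    hadd t ht
  have h2 := norm_sq_deriv P θ hθ_deriv (fun s => σ₁ s - σ₂ s) (fun s => σ₁' s - σ₂' s)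
    hsub t ht
  have H := (h1.sub h2).div_const 4
  have hfun : ∀ s, (‖P.φ s (σ₁ s + σ₂ s)‖ ^ 2 - ‖P.φ s (σ₁ s - σ₂ s)‖ ^ 2) / 4
      = (inner ℝ (P.φ s (σ₁ s)) (P.φ s (σ₂ s)) : ℝ) := by
    intro s
    rw [polar_inner, map_add, map_sub]
  have hder : (θ t (σ₁ t + σ₂ t)
        + 2 * (inner ℝ (P.φ t (σ₁' t + σ₂' t)) (P.φ t (σ₁ t + σ₂ t)) : ℝ)
      - (θ t (σ₁ t - σ₂ t)
        + 2 * (inner ℝ (P.φ t (σ₁' t - σ₂' t)) (P.φ t (σ₁ t - σ₂ t)) : ℝ))) / 4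
      = (inner ℝ (P.φ t (σ₁' t)) (P.φ t (σ₂ t)) : ℝ)
        + (inner ℝ (P.φ t (σ₁ t)) (P.φ t (σ₂' t)) : ℝ)
        + (θ t (σ₁ t + σ₂ t) - θ t (σ₁ t - σ₂ t)) / 4 := by
    simp only [map_add, map_sub, inner_add_left, inner_add_right, inner_sub_left,
      inner_sub_right]
    rw [real_inner_comm (P.φ t (σ₂' t)) (P.φ t (σ₁ t))]
    ring
  rw [← hder]
  exact H.congr (fun s _ => (hfun s).symm) (hfun t).symm
end
end

section
/- Under the stated assumptions, for every η ∈ D_V(0,T) there exists a sequence {η_n} ⊂ D_V(0,T) of the form η_n(t) = Σ_{j=1}^n ζ_j(t) φ_t w_j, with ζ_j ∈ C_c^∞((0,T);ℝ) and w_j ∈ V₀, such that η_n → η in W(V,V*). -/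
open MeasureTheory Set Filter Topology

noncomputable section

variable {T : ℝ} {X : ℝ → Type*} [∀ t, NormedAddCommGroup (X t)]
  [∀ t, InnerProductSpace ℝ (X t)]

section ProjAux

variable {E : Type*} [NormedAddCommGroup E] [InnerProductSpace ℝ E]

/-- Partial sum "projection" operator associated with a family `e`. -/
def projCLM (e : ℕ → E) (n : ℕ) : E →L[ℝ] E :=
  ∑ j ∈ Finset.range n, (innerSL ℝ (e j)).smulRight (e j)

lemma projCLM_apply (e : ℕ → E) (n : ℕ) (x : E) :
    projCLM e n x = ∑ j ∈ Finset.range n, (inner ℝ (e j) x : ℝ) • e j := by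
  simp [projCLM]

section OrthFamily

variable {e : ℕ → E} (horth : ∀ i j, i ≠ j → (inner ℝ (e i) (e j) : ℝ) = 0)
  (hnorm : ∀ j, e j = 0 ∨ ‖e j‖ = 1)

include horth hnorm

lemma inner_sub_projCLM {k n : ℕ} (hk : k < n) (x : E) :
    (inner ℝ (e k) (x - projCLM e n x) : ℝ) = 0 := by
  rw [inner_sub_right, projCLM_apply, inner_sum]
  rw [Finset.sum_eq_single k]
  · rcases hnorm k with h0 | h1
    · simp [h0]
    · rw [real_inner_smul_right, real_inner_self_eq_norm_sq, h1]
      ring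
  · intro j _ hj
    rw [real_inner_smul_right, horth k j (Ne.symm hj), mul_zero]
  · intro h
    exact absurd (Finset.mem_range.mpr hk) h

lemma norm_projCLM_le (n : ℕ) (x : E) : ‖projCLM e n x‖ ≤ ‖x‖ := by
  have h0 : (inner ℝ (x - projCLM e n x) (projCLM e n x) : ℝ) = 0 := by
    nth_rw 2 [projCLM_apply]
    rw [inner_sum]
    refine Finset.sum_eq_zero fun j hj => ?_
    rw [real_inner_smul_right, real_inner_comm (e j) (x - projCLM e n x),
      inner_sub_projCLM horth hnorm (Finset.mem_range.mp hj) x, mul_zero]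
  have hx : ‖x‖ ^ 2 = ‖x - projCLM e n x‖ ^ 2 + ‖projCLM e n x‖ ^ 2 := by
    have := norm_add_sq_real (x - projCLM e n x) (projCLM e n x)
    rw [sub_add_cancel] at this
    rw [this, h0]
    ring
  nlinarith [norm_nonneg (x - projCLM e n x), norm_nonneg (projCLM e n x),
    norm_nonneg x]

lemma projCLM_fix {k n : ℕ} (hk : k < n) : projCLM e n (e k) = e k := by
  rw [projCLM_apply, Finset.sum_eq_single k]
  · rcases hnorm k with h0 | h1
    · simp [h0]
    · rw [real_inner_self_eq_norm_sq, h1]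
      norm_num
  · intro j _ hj
    rw [horth j k hj, zero_smul]
  · intro h
    exact absurd (Finset.mem_range.mpr hk) h

lemma projCLM_fix_span {n : ℕ} {x : E}
    (hx : x ∈ Submodule.span ℝ (e '' Iio n)) : projCLM e n x = x := by
  induction hx using Submodule.span_induction with
  | mem y hy =>
    obtain ⟨k, hk, rfl⟩ := hy
    exact projCLM_fix horth hnorm hk
  | zero => simp
  | add y z _ _ hy hz => rw [map_add, hy, hz]
  | smul c y _ hy => rw [_root_.map_smul, hy]

end OrthFamily

/-- Construction of an orthogonal family from a dense sequence, such that the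
associated partial-sum projections converge uniformly on compact sets. -/
lemma exists_proj_approx (d : ℕ → E) (hd : DenseRange d) :
    ∃ e : ℕ → E, (∀ i j, i ≠ j → (inner ℝ (e i) (e j) : ℝ) = 0) ∧
      (∀ j, e j = 0 ∨ ‖e j‖ = 1) ∧
      ∀ K : Set E, IsCompact K → ∀ ε > 0,
        ∀ᶠ n in atTop, ∀ x ∈ K, ‖x - projCLM e n x‖ ≤ ε := by
  classical
  set e : ℕ → E := fun j => ‖InnerProductSpace.gramSchmidt ℝ d j‖⁻¹ • InnerProductSpace.gramSchmidt ℝ d j with he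
  have horth : ∀ i j, i ≠ j → (inner ℝ (e i) (e j) : ℝ) = 0 := by
    intro i j hij
    simp only [he, real_inner_smul_left, real_inner_smul_right]
    rw [InnerProductSpace.gramSchmidt_orthogonal ℝ d hij]
    ring
  have hnorm : ∀ j, e j = 0 ∨ ‖e j‖ = 1 := by
    intro j
    by_cases h : InnerProductSpace.gramSchmidt ℝ d j = 0
    · left; simp [he, h]
    · right
      simp only [he]
      rw [norm_smul, norm_inv, norm_norm, inv_mul_cancel₀ (norm_ne_zero_iff.mpr h)]
  refine ⟨e, horth, hnorm, ?_⟩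
  -- the dense vectors are eventually fixed by the projections
  have hfix : ∀ k n : ℕ, k < n → projCLM e n (d k) = d k := by
    intro k n hkn
    refine projCLM_fix_span horth hnorm ?_
    have h1 : d k ∈ Submodule.span ℝ (InnerProductSpace.gramSchmidt ℝ d '' Iio n) := by
      rw [InnerProductSpace.span_gramSchmidt_Iio ℝ d n]
      exact Submodule.subset_span ⟨k, hkn, rfl⟩
    refine Submodule.span_le.mpr ?_ h1
    rintro y ⟨j, hj, rfl⟩
    by_cases h : InnerProductSpace.gramSchmidt ℝ d j = 0
    · rw [h]
      exact Submodule.zero_mem _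
    · have hy : InnerProductSpace.gramSchmidt ℝ d j = ‖InnerProductSpace.gramSchmidt ℝ d j‖ • e j := by
        simp only [he]
        rw [smul_smul, mul_inv_cancel₀ (norm_ne_zero_iff.mpr h), one_smul]
      rw [hy]
      exact Submodule.smul_mem _ _ (Submodule.subset_span ⟨j, hj, rfl⟩)
  -- pointwise convergence
  have hpt : ∀ x : E, Tendsto (fun n => projCLM e n x) atTop (𝓝 x) := by
    intro x
    rw [Metric.tendsto_atTop]
    intro ε hε
    obtain ⟨k, hk⟩ := hd.exists_dist_lt x (half_pos hε)
    refine ⟨k + 1, fun n hn => ?_⟩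
    have h1 : projCLM e n (d k) = d k := hfix k n hn
    have h2 : ‖projCLM e n x - d k‖ ≤ ‖x - d k‖ := by
      rw [show projCLM e n x - d k = projCLM e n (x - d k) from by
        rw [map_sub, h1]]
      exact norm_projCLM_le horth hnorm n _
    rw [dist_eq_norm]
    calc ‖projCLM e n x - x‖
        ≤ ‖projCLM e n x - d k‖ + ‖d k - x‖ :=
          norm_sub_le_norm_sub_add_norm_sub _ _ _
      _ ≤ ‖x - d k‖ + ‖d k - x‖ := add_le_add h2 le_rfl
      _ = dist x (d k) + dist x (d k) := by
          rw [dist_eq_norm, norm_sub_rev (d k) x]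
      _ < ε / 2 + ε / 2 := by linarith
      _ = ε := by ring
  -- uniform convergence on compact sets
  intro K hK ε hε
  have hε3 : (0:ℝ) < ε / 3 := by linarith
  obtain ⟨t, htfin, htcov⟩ :=
    Metric.totallyBounded_iff.mp hK.totallyBounded (ε / 3) hε3
  have hev : ∀ᶠ n in atTop, ∀ y ∈ t, dist (projCLM e n y) y < ε / 3 := by
    rw [htfin.eventually_all]
    intro y _
    exact (hpt y) (Metric.ball_mem_nhds y hε3)
  filter_upwards [hev] with n hn x hx
  have hx' := htcov hx
  rw [Set.mem_iUnion₂] at hx'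
  obtain ⟨y, hyt, hxy⟩ := hx'
  have h1 : ‖x - y‖ < ε / 3 := by
    rw [← dist_eq_norm]
    exact Metric.mem_ball.mp hxy
  have h2 : ‖y - projCLM e n y‖ < ε / 3 := by
    rw [← dist_eq_norm, dist_comm]
    exact hn y hyt
  have h3 : ‖projCLM e n y - projCLM e n x‖ ≤ ‖y - x‖ := by
    rw [← map_sub]
    exact norm_projCLM_le horth hnorm n _
  calc ‖x - projCLM e n x‖
      ≤ ‖x - y‖ + ‖y - projCLM e n x‖ := norm_sub_le_norm_sub_add_norm_sub _ _ _
    _ ≤ ‖x - y‖ + (‖y - projCLM e n y‖ + ‖projCLM e n y - projCLM e n x‖) :=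
        add_le_add le_rfl (norm_sub_le_norm_sub_add_norm_sub _ _ _)
    _ ≤ ‖x - y‖ + (‖y - projCLM e n y‖ + ‖y - x‖) :=
        add_le_add le_rfl (add_le_add le_rfl h3)
    _ ≤ ε / 3 + (ε / 3 + ε / 3) := by
        rw [norm_sub_rev y x]
        exact add_le_add h1.le (add_le_add h2.le h1.le)
    _ = ε := by ring

end ProjAux

lemma setIntegral_le_of_pointwise {T c : ℝ} (hT : 0 < T) (hc : 0 ≤ c) (f : ℝ → ℝ)
    (hle : ∀ t ∈ Ioc (0:ℝ) T, f t ≤ c) :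
    ∫ t in Ioc (0:ℝ) T, f t ≤ T * c := by
  by_cases hf : MeasureTheory.IntegrableOn f (Ioc 0 T) volume
  · calc ∫ t in Ioc (0:ℝ) T, f t
        ≤ ∫ _ in Ioc (0:ℝ) T, c :=
          setIntegral_mono_on hf ((integrableOn_const_iff (C := c)).mpr (Or.inr (by
            rw [Real.volume_Ioc]; exact ENNReal.ofReal_lt_top)))
            measurableSet_Ioc hle
      _ = T * c := by
          rw [setIntegral_const, Real.volume_real_Ioc, smul_eq_mul,
            max_eq_left (by linarith)]
          ring
  · rw [MeasureTheory.integral_undef hf]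
    positivity

theorem stmt13 (T : ℝ) (hT : 0 < T) (V H : ℝ → Type*)
    [∀ t, NormedAddCommGroup (V t)] [∀ t, InnerProductSpace ℝ (V t)]
    [∀ t, NormedAddCommGroup (H t)] [∀ t, InnerProductSpace ℝ (H t)]
    [∀ t, CompleteSpace (V t)] [∀ t, TopologicalSpace.SeparableSpace (V t)]
    [∀ t, CompleteSpace (H t)] [∀ t, TopologicalSpace.SeparableSpace (H t)]
    (E : EvolvingGelfand T V H)
    (hESE : E.ESE) :
    -- for every `η ∈ D_V(0,T)` (with pullback `η₀`) there is a sequence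
    -- `η_n(t) = ∑_{j<n} ζ_j(t) φ_t w_j` in `D_V(0,T)` with `η_n → η` in `W(V,V*)`
    ∀ η₀ : ℝ → V 0, ContDiff ℝ (⊤ : ℕ∞) η₀ → tsupport η₀ ⊆ Ioo (0:ℝ) T →
      ∃ (ζ : ℕ → ℝ → ℝ) (w : ℕ → V 0),
        (∀ j, ContDiff ℝ (⊤ : ℕ∞) (ζ j) ∧ tsupport (ζ j) ⊆ Ioo (0:ℝ) T) ∧
        Tendsto
          (fun n => wn T
            (fun t => E.PV.φ t (η₀ t)
              - E.PV.φ t (∑ j ∈ Finset.range n, ζ j t • w j))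
            (fun t => E.embed t (E.ι t (E.PV.φ t
              (deriv η₀ t - ∑ j ∈ Finset.range n, deriv (ζ j) t • w j)))))
          atTop (nhds 0) := by
  intro η₀ hη hsupp
  classical
  obtain ⟨d, hd⟩ := TopologicalSpace.exists_dense_seq (V 0)
  obtain ⟨e, horth, hnorm, hunif⟩ := exists_proj_approx d hd
  refine ⟨fun j t => (inner ℝ (e j) (η₀ t) : ℝ), e, fun j => ⟨?_, ?_⟩, ?_⟩
  · exact (innerSL ℝ (e j)).contDiff.comp hη
  · have hss : Function.support (fun t => (inner ℝ (e j) (η₀ t) : ℝ))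
        ⊆ Function.support η₀ := by
      intro t ht
      simp only [Function.mem_support] at ht ⊢
      intro h0
      rw [h0, inner_zero_right] at ht
      exact ht rfl
    exact subset_trans (closure_mono hss) hsupp
  -- derivative identities
  have hηd : Differentiable ℝ η₀ := hη.differentiable (by simp)
  have hderiv : ∀ (j : ℕ) (t : ℝ), deriv (fun s => (inner ℝ (e j) (η₀ s) : ℝ)) t
      = (inner ℝ (e j) (deriv η₀ t) : ℝ) := by
    intro j t
    exact (((innerSL ℝ (e j)).hasFDerivAt).comp_hasDerivAt t (hηd t).hasDerivAt).deriv
  have hsum1 : ∀ (n : ℕ) (t : ℝ),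
      (∑ j ∈ Finset.range n, (inner ℝ (e j) (η₀ t) : ℝ) • e j) = projCLM e n (η₀ t) :=
    fun n t => (projCLM_apply e n (η₀ t)).symm
  have hsum2 : ∀ (n : ℕ) (t : ℝ),
      (∑ j ∈ Finset.range n, deriv (fun s => (inner ℝ (e j) (η₀ s) : ℝ)) t • e j)
        = projCLM e n (deriv η₀ t) := by
    intro n t
    rw [projCLM_apply]
    exact Finset.sum_congr rfl fun j _ => by rw [hderiv j t]
  -- constants
  have hCvpos := E.PV.C_pos
  set Cv := E.PV.C with hCvdef
  set K₀ := E.PH.C * ‖E.ι 0‖ * Cv with hK₀def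
  have hK₀nn : 0 ≤ K₀ := by
    have := E.PH.C_pos
    positivity
  have hι : ∀ t ∈ Icc (0:ℝ) T, ∀ v : V t, ‖E.ι t v‖ ≤ K₀ * ‖v‖ := by
    intro t ht v
    have hcompat := E.ι_compat t ((E.PV.φ t).symm v)
    rw [ContinuousLinearEquiv.apply_symm_apply] at hcompat
    rw [hcompat]
    calc ‖E.PH.φ t (E.ι 0 ((E.PV.φ t).symm v))‖
        ≤ E.PH.C * ‖E.ι 0 ((E.PV.φ t).symm v)‖ := E.PH.norm_map_le t ht _
      _ ≤ E.PH.C * (‖E.ι 0‖ * ‖(E.PV.φ t).symm v‖) :=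
          mul_le_mul_of_nonneg_left ((E.ι 0).le_opNorm _) E.PH.C_pos.le
      _ ≤ E.PH.C * (‖E.ι 0‖ * (Cv * ‖v‖)) := by
          have h1 := E.PV.norm_symm_le t ht v
          have h2 := E.PH.C_pos.le
          have h3 : (0:ℝ) ≤ ‖E.ι 0‖ := norm_nonneg _
          exact mul_le_mul_of_nonneg_left (mul_le_mul_of_nonneg_left h1 h3) h2
      _ = K₀ * ‖v‖ := by rw [hK₀def]; ring
  -- the compact set of relevant values
  have hcs : HasCompactSupport η₀ :=
    IsCompact.of_isClosed_subset isCompact_Icc (isClosed_tsupport _)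
      (hsupp.trans Ioo_subset_Icc_self)
  have hK1 : IsCompact (range η₀) := hcs.isCompact_range hη.continuous
  have hK2 : IsCompact (range (deriv η₀)) :=
    hcs.deriv.isCompact_range (hη.continuous_deriv (by simp))
  have hK : IsCompact (range η₀ ∪ range (deriv η₀)) := hK1.union hK2
  set A := Cv * (1 + K₀ ^ 2) with hAdef
  have hApos : 0 < A := by
    have h1 : (0:ℝ) < 1 + K₀ ^ 2 := by positivity
    exact mul_pos hCvpos h1
  rw [Metric.tendsto_nhds]
  intro ε hε
  have hden : (0:ℝ) < Real.sqrt (2 * T) * A + 1 := by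
    have := Real.sqrt_nonneg (2 * T)
    nlinarith
  set δ := ε / (Real.sqrt (2 * T) * A + 1) with hδdef
  have hδpos : 0 < δ := div_pos hε hden
  filter_upwards [hunif (range η₀ ∪ range (deriv η₀)) hK δ hδpos] with n hn
  rw [Real.dist_eq, sub_zero]
  rw [wn]
  rw [abs_of_nonneg (Real.sqrt_nonneg _)]
  -- pointwise bounds on the two integrands
  have hb1 : ∀ t ∈ Ioc (0:ℝ) T,
      ‖E.PV.φ t (η₀ t)
        - E.PV.φ t (∑ j ∈ Finset.range n, (inner ℝ (e j) (η₀ t) : ℝ) • e j)‖ ^ 2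
      ≤ (A * δ) ^ 2 := by
    intro t ht
    have htI : t ∈ Icc (0:ℝ) T := Ioc_subset_Icc_self ht
    rw [hsum1 n t, ← map_sub]
    have h1 : ‖E.PV.φ t (η₀ t - projCLM e n (η₀ t))‖
        ≤ Cv * ‖η₀ t - projCLM e n (η₀ t)‖ := E.PV.norm_map_le t htI _
    have h2 : ‖η₀ t - projCLM e n (η₀ t)‖ ≤ δ := hn (η₀ t) (Or.inl (mem_range_self t))
    have h3 : ‖E.PV.φ t (η₀ t - projCLM e n (η₀ t))‖ ≤ A * δ := by
      have h4 : Cv * ‖η₀ t - projCLM e n (η₀ t)‖ ≤ Cv * δ :=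
        mul_le_mul_of_nonneg_left h2 hCvpos.le
      have h5 : (0:ℝ) ≤ K₀ ^ 2 := sq_nonneg _
      rw [hAdef]
      nlinarith [mul_nonneg (mul_nonneg hCvpos.le h5) hδpos.le]
    exact pow_le_pow_left₀ (norm_nonneg _) h3 2
  have hb2 : ∀ t ∈ Ioc (0:ℝ) T,
      ‖E.embed t (E.ι t (E.PV.φ t (deriv η₀ t
        - ∑ j ∈ Finset.range n, deriv (fun s => (inner ℝ (e j) (η₀ s) : ℝ)) t • e j)))‖ ^ 2
      ≤ (A * δ) ^ 2 := by
    intro t ht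
    have htI : t ∈ Icc (0:ℝ) T := Ioc_subset_Icc_self ht
    rw [hsum2 n t]
    set x := deriv η₀ t - projCLM e n (deriv η₀ t) with hx
    have h2 : ‖x‖ ≤ δ := hn (deriv η₀ t) (Or.inr (mem_range_self t))
    have h3 : ‖E.ι t (E.PV.φ t x)‖ ≤ K₀ * (Cv * δ) := by
      calc ‖E.ι t (E.PV.φ t x)‖ ≤ K₀ * ‖E.PV.φ t x‖ := hι t htI _
        _ ≤ K₀ * (Cv * ‖x‖) :=
            mul_le_mul_of_nonneg_left (E.PV.norm_map_le t htI x) hK₀nn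
        _ ≤ K₀ * (Cv * δ) :=
            mul_le_mul_of_nonneg_left (mul_le_mul_of_nonneg_left h2 hCvpos.le) hK₀nn
    have h4 : ‖E.embed t (E.ι t (E.PV.φ t x))‖ ≤ K₀ * ‖E.ι t (E.PV.φ t x)‖ := by
      refine ContinuousLinearMap.opNorm_le_bound _
        (mul_nonneg hK₀nn (norm_nonneg _)) fun v => ?_
      show ‖(inner ℝ (E.ι t (E.PV.φ t x)) (E.ι t v) : ℝ)‖ ≤ _
      calc ‖(inner ℝ (E.ι t (E.PV.φ t x)) (E.ι t v) : ℝ)‖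
          ≤ ‖E.ι t (E.PV.φ t x)‖ * ‖E.ι t v‖ := norm_inner_le_norm _ _
        _ ≤ ‖E.ι t (E.PV.φ t x)‖ * (K₀ * ‖v‖) :=
            mul_le_mul_of_nonneg_left (hι t htI v) (norm_nonneg _)
        _ = K₀ * ‖E.ι t (E.PV.φ t x)‖ * ‖v‖ := by ring
    have h5 : ‖E.embed t (E.ι t (E.PV.φ t x))‖ ≤ A * δ := by
      have h6 := h4.trans (mul_le_mul_of_nonneg_left h3 hK₀nn)
      have h7 : (0:ℝ) ≤ K₀ ^ 2 := sq_nonneg _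
      rw [hAdef]
      nlinarith [h6, mul_nonneg hCvpos.le hδpos.le]
    exact pow_le_pow_left₀ (norm_nonneg _) h5 2
  -- integrate the bounds
  have hc : (0:ℝ) ≤ (A * δ) ^ 2 := sq_nonneg _
  have hI1 := setIntegral_le_of_pointwise hT hc _ hb1
  have hI2 := setIntegral_le_of_pointwise hT hc _ hb2
  have hnn2 : (0:ℝ) ≤ ∫ t in Ioc (0:ℝ) T,
      ‖E.embed t (E.ι t (E.PV.φ t (deriv η₀ t
        - ∑ j ∈ Finset.range n, deriv (fun s => (inner ℝ (e j) (η₀ s) : ℝ)) t • e j)))‖ ^ 2 :=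
    integral_nonneg fun t => by positivity
  have hnn1 : (0:ℝ) ≤ ∫ t in Ioc (0:ℝ) T,
      ‖E.PV.φ t (η₀ t)
        - E.PV.φ t (∑ j ∈ Finset.range n, (inner ℝ (e j) (η₀ t) : ℝ) • e j)‖ ^ 2 :=
    integral_nonneg fun t => by positivity
  calc Real.sqrt ((∫ t in Ioc (0:ℝ) T,
        ‖E.PV.φ t (η₀ t)
          - E.PV.φ t (∑ j ∈ Finset.range n, (inner ℝ (e j) (η₀ t) : ℝ) • e j)‖ ^ 2)
        + ∫ t in Ioc (0:ℝ) T,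
        ‖E.embed t (E.ι t (E.PV.φ t (deriv η₀ t
          - ∑ j ∈ Finset.range n, deriv (fun s => (inner ℝ (e j) (η₀ s) : ℝ)) t • e j)))‖ ^ 2)
      ≤ Real.sqrt (2 * T * (A * δ) ^ 2) := Real.sqrt_le_sqrt (by linarith)
    _ = Real.sqrt (2 * T) * (A * δ) := by
        rw [show (2 * T * (A * δ) ^ 2 : ℝ) = (2 * T) * (A * δ) ^ 2 by ring,
          Real.sqrt_mul (by linarith) ((A * δ) ^ 2),
          Real.sqrt_sq (by positivity)]
    _ < ε := by
        rw [show Real.sqrt (2 * T) * (A * δ) = (Real.sqrt (2 * T) * A) * δ by ring,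
          hδdef]
        calc (Real.sqrt (2 * T) * A) * (ε / (Real.sqrt (2 * T) * A + 1))
            < (Real.sqrt (2 * T) * A + 1) * (ε / (Real.sqrt (2 * T) * A + 1)) :=
              mul_lt_mul_of_pos_right (lt_add_one _) (div_pos hε hden)
          _ = ε := by field_simp
end
end
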